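/- arXiv:2009.06684 — 3 statements merged into one kernel-verified Lean document; each statement's English description precedes it below -/
import Mathlib

section
/- Define the Bernstein operator S_m on symmetric functions by S_m = Σ_{c≥0} (-1)^c M_{h_{m+c}} ∘ e_c^⊥ (where M_{h_k} is multiplication by the complete homogeneous symmetric function h_k, and e_c^⊥ is the Hall-adjoint of multiplication by the elementary symmetric function e_c; terms with m+c < 0 are zero). Then for any partition μ = (μ_1 ≥ ... ≥ μ_L) and any integer m ≥ μ_1, S_m(s_μ) = s_{(m, μ_1, ..., μ_L)}. -/
open scoped Classical

/-- An integer partition: a weakly decreasing sequence of naturals, eventually zero. -/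
structure Ptn where
  parts : ℕ → ℕ
  antitone : ∀ i, parts (i + 1) ≤ parts i
  eventually_zero : ∃ N, ∀ n, N ≤ n → parts n = 0

/-- Number of cells of a partition. -/
noncomputable def Ptn.size (μ : Ptn) : ℕ := ∑ᶠ i, μ.parts i

/-- Containment of partitions. -/
def PtnSub (ν μ : Ptn) : Prop := ∀ i, ν.parts i ≤ μ.parts i

/-- `HS c lam mu` : lam/mu is a horizontal strip of `c` cells. -/
def HS (c : ℕ) (lam mu : Ptn) : Prop :=
  PtnSub mu lam ∧ lam.size = mu.size + c ∧ ∀ i, lam.parts (i + 1) ≤ mu.parts i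

/-- `VS c lam mu` : lam/mu is a vertical strip of `c` cells. -/
def VS (c : ℕ) (lam mu : Ptn) : Prop :=
  PtnSub mu lam ∧ lam.size = mu.size + c ∧ ∀ i, lam.parts i ≤ mu.parts i + 1

variable (F : Type) [Field F]

/-- The Schur basis element `s_μ`, viewed as a coefficient function on partitions. -/
noncomputable def sB (μ : Ptn) : Ptn → F := fun lam => if lam = μ then 1 else 0

/-- Multiplication by the complete homogeneous symmetric function `h_k` (zero for `k < 0`),
acting on Schur coefficient functions via the Pieri rule. -/
noncomputable def Mh (k : ℤ) (P : Ptn → F) : Ptn → F :=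
  fun lam => if k < 0 then 0 else ∑ᶠ (mu : Ptn) (_ : HS k.toNat lam mu), P mu

/-- The Hall-adjoint `e_c^⊥` of multiplication by `e_c`, via the dual Pieri rule. -/
noncomputable def eperp (c : ℕ) (P : Ptn → F) : Ptn → F :=
  fun nu => ∑ᶠ (mu : Ptn) (_ : VS c mu nu), P mu

/-- The Hall-adjoint `h_c^⊥` of multiplication by `h_c`, via the dual Pieri rule. -/
noncomputable def hperp (c : ℕ) (P : Ptn → F) : Ptn → F :=
  fun nu => ∑ᶠ (mu : Ptn) (_ : HS c mu nu), P mu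

/-- The Bernstein creation operator `S_m = Σ_{c≥0} (-1)^c M_{h_{m+c}} ∘ e_c^⊥`. -/
noncomputable def Sop (m : ℤ) (P : Ptn → F) : Ptn → F :=
  fun lam => ∑ᶠ c : ℕ, (-1 : F) ^ c * Mh F (m + c) (eperp F c P) lam

/-- The Jing creation operator `H_m = Σ_{c≥0} q^c S_{m+c} ∘ h_c^⊥`. -/
noncomputable def Hop (q : F) (m : ℤ) (P : Ptn → F) : Ptn → F :=
  fun lam => ∑ᶠ c : ℕ, q ^ c * Sop F (m + c) (hperp F c P) lam

/-- The empty partition. -/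
def ptnZero : Ptn := ⟨fun _ => 0, fun _ => le_refl 0, ⟨0, fun _ _ => rfl⟩⟩

/-- The constant symmetric function `1 = s_∅`. -/
noncomputable def oneSym : Ptn → F := sB F ptnZero

-- ===== aux =====

lemma Ptn.ext' {a b : Ptn} (h : a.parts = b.parts) : a = b := by
  cases a; cases b; simp_all

lemma Ptn.anti (μ : Ptn) : Antitone μ.parts :=
  antitone_nat_of_succ_le μ.antitone

lemma Ptn.size_eq_sum (μ : Ptn) {N : ℕ} (h : ∀ n, N ≤ n → μ.parts n = 0) :
    μ.size = ∑ i ∈ Finset.range N, μ.parts i := by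
  apply finsum_eq_sum_of_support_subset
  intro x hx
  simp only [Function.mem_support] at hx
  simp only [Finset.coe_range, Set.mem_Iio]
  by_contra h'
  exact hx (h x (not_lt.1 h'))

lemma subPtn_finite (lam : Ptn) : {ν : Ptn | PtnSub ν lam}.Finite := by
  obtain ⟨N, hN⟩ := lam.eventually_zero
  have : Finite ↥{ν : Ptn | PtnSub ν lam} := by
    refine Finite.of_injective
      (fun ν => (fun i : Fin N => (⟨(ν : Ptn).parts i, ?_⟩ : Fin (lam.parts 0 + 1)))) ?_
    · have h1 := ν.2 i
      have h2 := lam.anti (Nat.zero_le (i : ℕ))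
      omega
    · intro a b hab
      apply Subtype.ext; apply Ptn.ext'; funext n
      by_cases hn : n < N
      · have := congrFun hab ⟨n, hn⟩
        simpa using this
      · have h0 : lam.parts n = 0 := hN n (le_of_not_gt hn)
        have h1 := a.2 n; have h2 := b.2 n
        omega
  exact Set.toFinite _

lemma size_shift (ν μ : Ptn) (h : ∀ i, ν.parts (i + 1) = μ.parts i) :
    ν.size = ν.parts 0 + μ.size := by
  obtain ⟨N, hN⟩ := μ.eventually_zero
  have hν : ∀ n, N + 1 ≤ n → ν.parts n = 0 := by
    intro n hn
    obtain ⟨k, rfl⟩ : ∃ k, n = k + 1 := ⟨n - 1, by omega⟩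
    rw [h k]; exact hN k (by omega)
  rw [ν.size_eq_sum hν, μ.size_eq_sum hN, Finset.sum_range_succ']
  simp only [h]
  omega

lemma size_le_shift (a b : Ptn) (h : ∀ i, a.parts (i + 1) ≤ b.parts i) :
    a.size ≤ a.parts 0 + b.size := by
  obtain ⟨N, hN⟩ := b.eventually_zero
  have ha : ∀ n, N + 1 ≤ n → a.parts n = 0 := by
    intro n hn
    obtain ⟨k, rfl⟩ : ∃ k, n = k + 1 := ⟨n - 1, by omega⟩
    have := h k; have := hN k (by omega); omega
  rw [a.size_eq_sum ha, b.size_eq_sum hN, Finset.sum_range_succ']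
  have : ∑ i ∈ Finset.range N, a.parts (i + 1) ≤ ∑ i ∈ Finset.range N, b.parts i :=
    Finset.sum_le_sum (fun i _ => h i)
  omega

lemma size_diff_one (a b : Ptn) (i₀ : ℕ) (h : ∀ i, i ≠ i₀ → a.parts i = b.parts i) :
    a.size + b.parts i₀ = b.size + a.parts i₀ := by
  obtain ⟨Na, hNa⟩ := a.eventually_zero
  obtain ⟨Nb, hNb⟩ := b.eventually_zero
  set N := max (max Na Nb) (i₀ + 1) with hNdef
  have hNa' : Na ≤ N := by omega
  have hNb' : Nb ≤ N := by omega
  have hi : i₀ ∈ Finset.range N := by simp only [Finset.mem_range]; omega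
  rw [a.size_eq_sum (N := N) (fun n hn => hNa n (by omega)),
    b.size_eq_sum (N := N) (fun n hn => hNb n (by omega)),
    ← Finset.add_sum_erase _ _ hi, ← Finset.add_sum_erase _ _ hi]
  have he : ∑ x ∈ (Finset.range N).erase i₀, a.parts x
      = ∑ x ∈ (Finset.range N).erase i₀, b.parts x :=
    Finset.sum_congr rfl (fun x hx => h x (Finset.ne_of_mem_erase hx))
  omega

lemma size_lt (a b : Ptn) (hsub : PtnSub a b) (i₀ : ℕ) (h : a.parts i₀ < b.parts i₀) :
    a.size < b.size := by
  obtain ⟨Nb, hNb⟩ := b.eventually_zero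
  set N := max Nb (i₀ + 1) with hNdef
  have hNb' : Nb ≤ N := by omega
  have ha0 : ∀ n, N ≤ n → a.parts n = 0 := by
    intro n hn
    have := hsub n; have := hNb n (by omega); omega
  rw [a.size_eq_sum (N := N) ha0, b.size_eq_sum (N := N) (fun n hn => hNb n (by omega))]
  exact Finset.sum_lt_sum (fun i _ => hsub i) ⟨i₀, by simp only [Finset.mem_range]; omega, h⟩

def GoodP (M : ℕ) (μ lam : Ptn) (c : ℕ) (ν' : Ptn) : Prop :=
  VS c μ ν' ∧ HS (M + c) lam ν'

/-- prepend a new largest part -/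
def consPtn (M : ℕ) (μ : Ptn) (h : μ.parts 0 ≤ M) : Ptn where
  parts := fun i => match i with
    | 0 => M
    | (j + 1) => μ.parts j
  antitone := by
    intro i
    match i with
    | 0 => exact h
    | (j + 1) => exact μ.antitone j
  eventually_zero := by
    obtain ⟨N, hN⟩ := μ.eventually_zero
    refine ⟨N + 1, fun n hn => ?_⟩
    match n, hn with
    | (j + 1), hn => exact hN j (by omega)

/-- the flipped partition for the sign-reversing involution -/
def flipPtn (μ lam : Ptn) (i₀ : ℕ)
    (hA : 1 ≤ μ.parts i₀ ∧ lam.parts (i₀ + 1) + 1 ≤ μ.parts i₀ ∧ μ.parts i₀ ≤ lam.parts i₀)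
    {M c : ℕ} {ν' : Ptn} (hG : GoodP M μ lam c ν') : Ptn where
  parts := fun i => if i = i₀ then μ.parts i₀ + (μ.parts i₀ - 1) - ν'.parts i₀ else ν'.parts i
  antitone := by
    intro i
    obtain ⟨⟨hsub, _, hvs⟩, ⟨hsub2, _, hhs⟩⟩ := hG
    have h1 := hsub i₀
    have h2 := hvs i₀
    have h3 := hsub2 (i₀ + 1)
    have h4 := ν'.antitone i
    by_cases e1 : i = i₀
    · subst e1
      rw [if_pos rfl, if_neg (by omega)]
      omega
    · by_cases e2 : i + 1 = i₀
      · have h5 := hhs i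
        rw [e2] at h5 ⊢
        rw [if_pos rfl, if_neg e1]
        omega
      · rw [if_neg e1, if_neg e2]; exact h4
  eventually_zero := by
    obtain ⟨N, hN⟩ := ν'.eventually_zero
    refine ⟨max N (i₀ + 1), fun n hn => ?_⟩
    rw [if_neg (by omega)]
    exact hN n (by omega)

lemma flipPtn_parts (μ lam : Ptn) (i₀ : ℕ) (hA : 1 ≤ μ.parts i₀ ∧ lam.parts (i₀ + 1) + 1 ≤ μ.parts i₀ ∧ μ.parts i₀ ≤ lam.parts i₀)
    {M c : ℕ} {ν' : Ptn}
    (hG : GoodP M μ lam c ν') (i : ℕ) :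
    (flipPtn μ lam i₀ hA hG).parts i
      = if i = i₀ then μ.parts i₀ + (μ.parts i₀ - 1) - ν'.parts i₀ else ν'.parts i := rfl

lemma flipPtn_size (μ lam : Ptn) (i₀ : ℕ) (hA : 1 ≤ μ.parts i₀ ∧ lam.parts (i₀ + 1) + 1 ≤ μ.parts i₀ ∧ μ.parts i₀ ≤ lam.parts i₀)
    {M c : ℕ} {ν' : Ptn}
    (hG : GoodP M μ lam c ν') :
    (flipPtn μ lam i₀ hA hG).size + ν'.parts i₀
      = ν'.size + (μ.parts i₀ + (μ.parts i₀ - 1) - ν'.parts i₀) := by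
  have := size_diff_one (flipPtn μ lam i₀ hA hG) ν' i₀
    (fun i hi => by rw [flipPtn_parts, if_neg hi])
  rw [flipPtn_parts, if_pos rfl] at this
  omega

lemma flipPtn_good (μ lam : Ptn) (i₀ : ℕ) (hA : 1 ≤ μ.parts i₀ ∧ lam.parts (i₀ + 1) + 1 ≤ μ.parts i₀ ∧ μ.parts i₀ ≤ lam.parts i₀)
    {M c : ℕ} {ν' : Ptn}
    (hG : GoodP M μ lam c ν') :
    1 ≤ c + (if ν'.parts i₀ = μ.parts i₀ then 1 else 0) ∧
    GoodP M μ lam (if ν'.parts i₀ = μ.parts i₀ then c + 1 else c - 1)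
      (flipPtn μ lam i₀ hA hG) := by
  obtain ⟨⟨hsub, hsz, hvs⟩, ⟨hsub2, hsz2, hhs⟩⟩ := id hG
  have h1 := hsub i₀
  have h2 := hvs i₀
  have hd := flipPtn_size μ lam i₀ hA ⟨⟨hsub, hsz, hvs⟩, ⟨hsub2, hsz2, hhs⟩⟩
  -- c ≥ 1 when ν'.parts i₀ < μ.parts i₀
  have hc1 : ν'.parts i₀ < μ.parts i₀ → 1 ≤ c := by
    intro hlt
    have := size_lt ν' μ hsub i₀ hlt
    omega
  constructor
  · by_cases e : ν'.parts i₀ = μ.parts i₀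
    · simp [e]
    · have := hc1 (by omega); simp [e]; omega
  refine ⟨⟨?_, ?_, ?_⟩, ⟨?_, ?_, ?_⟩⟩
  · intro i
    rw [flipPtn_parts]
    by_cases e : i = i₀
    · subst e; rw [if_pos rfl]; omega
    · rw [if_neg e]; exact hsub i
  · by_cases e : ν'.parts i₀ = μ.parts i₀
    · rw [if_pos e]; omega
    · rw [if_neg e]; have := hc1 (by omega); omega
  · intro i
    rw [flipPtn_parts]
    by_cases e : i = i₀
    · subst e; rw [if_pos rfl]; omega
    · rw [if_neg e]; exact hvs i
  · intro i
    rw [flipPtn_parts]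
    by_cases e : i = i₀
    · subst e; rw [if_pos rfl]
      have := hsub2 i; omega
    · rw [if_neg e]; exact hsub2 i
  · by_cases e : ν'.parts i₀ = μ.parts i₀
    · rw [if_pos e]; omega
    · rw [if_neg e]; have := hc1 (by omega); omega
  · intro i
    rw [flipPtn_parts]
    by_cases e : i = i₀
    · subst e; rw [if_pos rfl]; omega
    · rw [if_neg e]; exact hhs i

lemma flipPtn_ne (μ lam : Ptn) (i₀ : ℕ)
    (hA : 1 ≤ μ.parts i₀ ∧ lam.parts (i₀ + 1) + 1 ≤ μ.parts i₀ ∧ μ.parts i₀ ≤ lam.parts i₀)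
    {M c : ℕ} {ν' : Ptn} (hG : GoodP M μ lam c ν') :
    flipPtn μ lam i₀ hA hG ≠ ν' := by
  intro h
  have h1 := hG.1.1 i₀
  have h2 := hG.1.2.2 i₀
  have := congrArg (fun p => Ptn.parts p i₀) h
  rw [flipPtn_parts, if_pos rfl] at this
  omega

lemma flipPtn_flip (μ lam : Ptn) (i₀ : ℕ)
    (hA : 1 ≤ μ.parts i₀ ∧ lam.parts (i₀ + 1) + 1 ≤ μ.parts i₀ ∧ μ.parts i₀ ≤ lam.parts i₀)
    {M c : ℕ} {ν' : Ptn} (hG : GoodP M μ lam c ν')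
    {c2 : ℕ} (hG2 : GoodP M μ lam c2 (flipPtn μ lam i₀ hA hG)) :
    flipPtn μ lam i₀ hA hG2 = ν' := by
  have h1 := hG.1.1 i₀
  have h2 := hG.1.2.2 i₀
  apply Ptn.ext'
  funext i
  rw [flipPtn_parts]
  by_cases e : i = i₀
  · subst e
    rw [if_pos rfl, flipPtn_parts, if_pos rfl]
    omega
  · rw [if_neg e, flipPtn_parts, if_neg e]


lemma eperp_sB (c : ℕ) (μ ν' : Ptn) :
    eperp ℚ c (sB ℚ μ) ν' = if VS c μ ν' then 1 else 0 := by
  unfold eperp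
  rw [finsum_eq_single _ μ (fun x hx => by rw [finsum_eq_if]; simp [sB, hx]),
    finsum_eq_if]
  simp [sB]

lemma Sop_formula (μ lam : Ptn) (m : ℤ) (hm0 : 0 ≤ m) :
    Sop ℚ m (sB ℚ μ) lam
      = ∑ p ∈ Finset.range (μ.size + 1) ×ˢ (subPtn_finite lam).toFinset,
          (if GoodP m.toNat μ lam p.1 p.2 then ((-1 : ℚ)) ^ p.1 else 0) := by
  set M := m.toNat with hMdef
  set S := (subPtn_finite lam).toFinset with hSdef
  have hterm : ∀ c : ℕ, (-1 : ℚ) ^ c * Mh ℚ (m + c) (eperp ℚ c (sB ℚ μ)) lam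
      = ∑ ν' ∈ S, (if GoodP M μ lam c ν' then ((-1 : ℚ)) ^ c else 0) := by
    intro c
    unfold Mh
    rw [if_neg (by omega)]
    have htn : (m + (c : ℤ)).toNat = M + c := by omega
    rw [htn]
    have hcong : ∀ ν' : Ptn, (∑ᶠ (_ : HS (M + c) lam ν'), eperp ℚ c (sB ℚ μ) ν')
        = (if GoodP M μ lam c ν' then (1 : ℚ) else 0) := by
      intro ν'
      rw [finsum_eq_if, eperp_sB]
      by_cases h1 : HS (M + c) lam ν' <;> by_cases h2 : VS c μ ν' <;>
        simp [GoodP, h1, h2]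
    have hs : Function.support (fun ν' => if GoodP M μ lam c ν' then (1 : ℚ) else 0)
        ⊆ ↑S := by
      intro ν' hν'
      simp only [Function.mem_support] at hν'
      have hg : GoodP M μ lam c ν' := by
        by_contra h; rw [if_neg h] at hν'; exact hν' rfl
      rw [hSdef]
      simp only [Set.Finite.coe_toFinset, Set.mem_setOf_eq]
      exact hg.2.1
    rw [finsum_congr hcong, finsum_eq_sum_of_support_subset _ hs, Finset.mul_sum]
    exact Finset.sum_congr rfl (fun ν' _ => by
      by_cases h : GoodP M μ lam c ν' <;> simp [h])
  have h1 : Sop ℚ m (sB ℚ μ) lam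
      = ∑ᶠ c : ℕ, ∑ ν' ∈ S, (if GoodP M μ lam c ν' then ((-1 : ℚ)) ^ c else 0) := by
    unfold Sop; exact finsum_congr hterm
  have hr : Function.support
      (fun c : ℕ => ∑ ν' ∈ S, (if GoodP M μ lam c ν' then ((-1 : ℚ)) ^ c else 0))
      ⊆ ↑(Finset.range (μ.size + 1)) := by
    intro c hc
    simp only [Function.mem_support] at hc
    simp only [Finset.coe_range, Set.mem_Iio]
    by_contra h
    apply hc
    apply Finset.sum_eq_zero
    intro ν' _
    apply if_neg
    intro hg
    have h1 := hg.1.2.1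
    omega
  rw [h1]
  exact (finsum_eq_sum_of_support_subset _ hr).trans
    (Finset.sum_product (Finset.range (μ.size + 1)) S
      (fun p => if GoodP M μ lam p.1 p.2 then ((-1 : ℚ)) ^ p.1 else 0)).symm

/-- Bernstein creation: for any partition `μ` and any integer `m ≥ μ₁`,
`S_m(s_μ) = s_{(m, μ₁, μ₂, ...)}`, the Schur function of the partition obtained
by prepending a new largest part `m`. -/
theorem bernstein_creates_row (μ : Ptn) (m : ℤ) (hm : (μ.parts 0 : ℤ) ≤ m) :
    ∃ ν : Ptn, (ν.parts 0 : ℤ) = m ∧ (∀ i, ν.parts (i + 1) = μ.parts i) ∧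
      Sop ℚ m (sB ℚ μ) = sB ℚ ν := by
  have hμ0 : (0 : ℤ) ≤ (μ.parts 0 : ℤ) := Int.ofNat_nonneg _
  have hm0 : 0 ≤ m := le_trans hμ0 hm
  have hμM : μ.parts 0 ≤ m.toNat := by omega
  set M := m.toNat with hMdef
  set ν := consPtn M μ hμM with hνdef
  have hν0 : ν.parts 0 = M := rfl
  have hνs : ∀ i, ν.parts (i + 1) = μ.parts i := fun i => rfl
  have hsubμν : PtnSub μ ν := by
    intro i
    cases i with
    | zero => exact hμM
    | succ j => rw [hνs j]; exact μ.antitone j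
  have hνsize : ν.size = M + μ.size := by
    rw [size_shift ν μ hνs, hν0]
  refine ⟨ν, by rw [hν0]; omega, hνs, ?_⟩
  funext lam
  rw [Sop_formula μ lam m hm0]
  rw [← hMdef]
  rw [show sB ℚ ν lam = if lam = ν then 1 else 0 from rfl]
  by_cases hlam : lam = ν
  · rw [if_pos hlam]
    subst hlam
    have hGood : GoodP M μ ν 0 μ := by
      refine ⟨⟨fun i => le_refl _, by omega, fun i => by omega⟩,
        ⟨hsubμν, ?_, fun i => le_of_eq (hνs i)⟩⟩
      rw [hνsize]; omega
    rw [Finset.sum_eq_single_of_mem (0, μ) ?mem ?rest]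
    · rw [if_pos hGood]; norm_num
    case mem =>
      rw [Finset.mem_product]
      constructor
      · simp
      · rw [Set.Finite.mem_toFinset]; exact hsubμν
    case rest =>
      intro b hb hne
      apply if_neg
      intro hg
      apply hne
      have hps : b.2 = μ := by
        apply Ptn.ext'; funext i
        have h1 := hg.1.1 i
        have h2 := hg.2.2.2 i
        rw [hνs i] at h2
        omega
      have hc : b.1 = 0 := by
        have h3 := hg.1.2.1
        rw [hps] at h3
        omega
      exact Prod.ext hc hps
  · rw [if_neg hlam]
    by_cases hA : ∃ i₀, 1 ≤ μ.parts i₀ ∧ lam.parts (i₀ + 1) + 1 ≤ μ.parts i₀ ∧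
        μ.parts i₀ ≤ lam.parts i₀
    · obtain ⟨i₀, hAi⟩ := hA
      refine Finset.sum_involution
        (fun p _ => if h : GoodP M μ lam p.1 p.2 then
          ((if p.2.parts i₀ = μ.parts i₀ then p.1 + 1 else p.1 - 1), flipPtn μ lam i₀ hAi h)
          else p) ?h1 ?h2 ?h3 ?h4
      case h1 =>
        intro p hp
        by_cases h : GoodP M μ lam p.1 p.2
        · rw [dif_pos h]
          have hg2 := (flipPtn_good μ lam i₀ hAi h).2
          have hc2 := (flipPtn_good μ lam i₀ hAi h).1
          rw [if_pos h]
          dsimp only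
          rw [if_pos hg2]
          by_cases e : p.2.parts i₀ = μ.parts i₀
          · rw [if_pos e, pow_succ]; ring
          · rw [if_neg e]
            rw [if_neg e] at hc2
            obtain ⟨k, hk⟩ : ∃ k, p.1 = k + 1 := ⟨p.1 - 1, by omega⟩
            rw [hk]
            have : k + 1 - 1 = k := by omega
            rw [this, pow_succ]; ring
        · rw [dif_neg h, if_neg h]
          norm_num
      case h2 =>
        intro p hp hf
        have h : GoodP M μ lam p.1 p.2 := by
          by_contra hh; rw [if_neg hh] at hf; exact hf rfl
        rw [dif_pos h]
        intro he
        exact flipPtn_ne μ lam i₀ hAi h (congrArg Prod.snd he)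
      case h3 =>
        intro p hp
        by_cases h : GoodP M μ lam p.1 p.2
        · rw [dif_pos h]
          have hg2 := (flipPtn_good μ lam i₀ hAi h).2
          rw [Finset.mem_product]
          constructor
          · simp only [Finset.mem_range]
            have := hg2.1.2.1
            omega
          · rw [Set.Finite.mem_toFinset]
            exact hg2.2.1
        · rw [dif_neg h]; exact hp
      case h4 =>
        intro p hp
        by_cases h : GoodP M μ lam p.1 p.2
        · have hg2 := (flipPtn_good μ lam i₀ hAi h).2
          have hc2 := (flipPtn_good μ lam i₀ hAi h).1
          rw [dif_pos h]
          dsimp only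
          rw [dif_pos hg2]
          have hfp : (flipPtn μ lam i₀ hAi h).parts i₀
              = μ.parts i₀ + (μ.parts i₀ - 1) - p.2.parts i₀ := by
            rw [flipPtn_parts]; rw [if_pos rfl]
          refine Prod.ext ?_ (flipPtn_flip μ lam i₀ hAi h hg2)
          dsimp only
          rw [hfp]
          have hx : p.2.parts i₀ ≤ μ.parts i₀ := h.1.1 i₀
          have hx2 : μ.parts i₀ ≤ p.2.parts i₀ + 1 := h.1.2.2 i₀
          have hA1 := hAi.1
          by_cases e : p.2.parts i₀ = μ.parts i₀
          · rw [if_pos e, if_neg (by omega)]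
            omega
          · rw [if_neg e] at hc2 ⊢
            rw [if_pos (by omega)]
            omega
        · simp only [dif_neg h]
    · push_neg at hA
      apply Finset.sum_eq_zero
      intro p hp
      apply if_neg
      intro hg
      apply hlam
      have dich : ∀ i, μ.parts i = lam.parts (i + 1) ∨ μ.parts i = lam.parts i + 1 := by
        intro i
        have h1 := hg.1.1 i
        have h2 := hg.1.2.2 i
        have h3 := hg.2.1 i
        have h4 := hg.2.2.2 i
        have h5 := hA i
        omega
      have hsz : lam.size = μ.size + M := by
        have e1 := hg.1.2.1
        have e2 := hg.2.2.1
        omega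
      by_cases hex : ∃ j, μ.parts j = lam.parts j + 1
      · exfalso
        have key : ∀ j, μ.parts j = lam.parts j + 1 → μ.parts 0 = lam.parts 0 + 1 := by
          intro j
          induction j with
          | zero => exact fun h => h
          | succ k ih =>
            intro hj
            rcases dich k with h | h
            · exfalso; have := μ.antitone k; omega
            · exact ih h
        obtain ⟨j, hj⟩ := hex
        have h0 := key j hj
        have hle : ∀ i, lam.parts (i + 1) ≤ μ.parts i := by
          intro i
          rcases dich i with h | h
          · omega
          · have := lam.antitone i; omega
        have := size_le_shift lam μ hle
        omega
      · push_neg at hex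
        have hall : ∀ i, lam.parts (i + 1) = μ.parts i := by
          intro i
          rcases dich i with h | h
          · omega
          · exact absurd h (hex i)
        have hss := size_shift lam μ hall
        have hl0 : lam.parts 0 = M := by omega
        apply Ptn.ext'
        funext i
        cases i with
        | zero => rw [hl0, hν0]
        | succ j => rw [hall j, hνs j]
end

section
/- The Bernstein operators satisfy the commutation rule S_m ∘ S_n = - S_{n-1} ∘ S_{m+1} for all integers m and n. In particular S_m ∘ S_{m+1} = 0. -/
open scoped Classical

variable (F : Type) [Field F]

namespace BP

lemma ptn_ext {μ ν : Ptn} (h : μ.parts = ν.parts) : μ = ν := by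
  cases μ; cases ν; simp_all

lemma anti (μ : Ptn) : Antitone μ.parts :=
  antitone_nat_of_succ_le μ.antitone

/-- a zero threshold -/
noncomputable def bnd (μ : Ptn) : ℕ := μ.eventually_zero.choose

lemma bnd_spec (μ : Ptn) : ∀ n, bnd μ ≤ n → μ.parts n = 0 := μ.eventually_zero.choose_spec

lemma parts_le_zero (μ : Ptn) (i : ℕ) : μ.parts i ≤ μ.parts 0 := anti μ (Nat.zero_le i)

/-- partial sum -/
def psum (f : ℕ → ℕ) (M : ℕ) : ℕ := ∑ i ∈ Finset.range M, f i

lemma size_eq (μ : Ptn) (M : ℕ) (h : ∀ i, M ≤ i → μ.parts i = 0) :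
    μ.size = psum μ.parts M := by
  unfold Ptn.size psum
  apply finsum_eq_finset_sum_of_support_subset
  intro x hx
  simp only [Function.mem_support] at hx
  simp only [Finset.coe_range, Set.mem_Iio]
  by_contra hc
  exact hx (h x (le_of_not_gt hc))

lemma sub_zero {ν μ : Ptn} (h : PtnSub ν μ) {n : ℕ} (hn : μ.parts n = 0) : ν.parts n = 0 :=
  Nat.le_zero.mp (hn ▸ h n)

lemma psum_le_size (μ : Ptn) (M : ℕ) : psum μ.parts M ≤ μ.size := by
  rw [size_eq μ (max M (bnd μ)) (fun i hi => bnd_spec μ i (le_trans (le_max_right _ _) hi))]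
  unfold psum
  exact Finset.sum_le_sum_of_subset (Finset.range_subset_range.2 (le_max_left _ _))

lemma sub_size_le {ν μ : Ptn} (h : PtnSub ν μ) : ν.size ≤ μ.size := by
  have hM : ∀ i, max (bnd ν) (bnd μ) ≤ i → μ.parts i = 0 :=
    fun i hi => bnd_spec μ i (le_trans (le_max_right _ _) hi)
  have hN : ∀ i, max (bnd ν) (bnd μ) ≤ i → ν.parts i = 0 :=
    fun i hi => bnd_spec ν i (le_trans (le_max_left _ _) hi)
  rw [size_eq μ _ hM, size_eq ν _ hN]
  exact Finset.sum_le_sum (fun i _ => h i)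

lemma sub_size_eq {ν μ : Ptn} (h : PtnSub ν μ) (hs : μ.size = ν.size) : μ = ν := by
  apply ptn_ext; funext i
  set M := max (max (bnd ν) (bnd μ)) (i+1) with hMdef
  have hM : ∀ j, M ≤ j → μ.parts j = 0 :=
    fun j hj => bnd_spec μ j (le_trans (le_trans (le_max_right _ _) (le_max_left _ _)) hj)
  have hN : ∀ j, M ≤ j → ν.parts j = 0 :=
    fun j hj => bnd_spec ν j (le_trans (le_trans (le_max_left _ _) (le_max_left _ _)) hj)
  have h1 := size_eq μ M hM
  have h2 := size_eq ν M hN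
  have hsum : ∑ j ∈ Finset.range M, ν.parts j = ∑ j ∈ Finset.range M, μ.parts j := by
    have := hs; rw [h1, h2] at this; unfold psum at this; omega
  have := (Finset.sum_eq_sum_iff_of_le (fun j _ => h j)).mp hsum i
    (Finset.mem_range.2 (lt_of_lt_of_le (Nat.lt_succ_self i) (le_max_right _ _)))
  exact this.symm

end BP
namespace BP

lemma fin_of_bounds (S : Set Ptn) (N B : ℕ)
    (h0 : ∀ μ ∈ S, ∀ i, N ≤ i → μ.parts i = 0)
    (hb : ∀ μ ∈ S, ∀ i, μ.parts i ≤ B) : S.Finite := by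
  apply Set.Finite.of_finite_image (f := fun μ : Ptn => fun i : Fin N => μ.parts i)
  · apply Set.Finite.subset (Set.Finite.pi (fun _ : Fin N => Set.finite_Iic B))
    rintro g ⟨μ, hμ, rfl⟩
    intro i _
    exact hb μ hμ i
  · intro μ hμ ν hν hfg
    apply ptn_ext; funext i
    by_cases hi : i < N
    · exact congrFun hfg ⟨i, hi⟩
    · rw [h0 μ hμ i (le_of_not_gt hi), h0 ν hν i (le_of_not_gt hi)]

lemma fin_sub (lam : Ptn) : {μ : Ptn | PtnSub μ lam}.Finite := by
  apply fin_of_bounds _ (bnd lam) (lam.parts 0)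
  · exact fun μ hμ i hi => sub_zero hμ (bnd_spec lam i hi)
  · exact fun μ hμ i => le_trans (hμ i) (parts_le_zero lam i)

lemma sup_zero {lam μ : Ptn} {c : ℕ} (h : PtnSub lam μ) (hs : μ.size = lam.size + c) :
    ∀ i, bnd lam + c ≤ i → μ.parts i = 0 := by
  set N := bnd lam with hN
  have key : μ.parts (N + c) = 0 := by
    by_contra hc
    have h1 : 1 ≤ μ.parts (N + c) := Nat.one_le_iff_ne_zero.2 hc
    have e1 : psum μ.parts (N + c + 1) ≤ μ.size := psum_le_size μ _
    have e2 : lam.size = psum lam.parts N := size_eq lam N (bnd_spec lam)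
    have e3 : psum μ.parts (N + c + 1) =
        psum μ.parts N + ∑ i ∈ Finset.Ico N (N + c + 1), μ.parts i := by
      unfold psum
      rw [Finset.range_eq_Ico, Finset.range_eq_Ico]
      exact (Finset.sum_Ico_consecutive μ.parts (Nat.zero_le N) (by omega : N ≤ N + c + 1)).symm
    have e4 : psum lam.parts N ≤ psum μ.parts N :=
      Finset.sum_le_sum (fun i _ => h i)
    have e5 : c + 1 ≤ ∑ i ∈ Finset.Ico N (N + c + 1), μ.parts i := by
      calc c + 1 = ∑ _i ∈ Finset.Ico N (N + c + 1), 1 := by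
            rw [Finset.sum_const, smul_eq_mul, mul_one, Nat.card_Ico]; omega
        _ ≤ _ := Finset.sum_le_sum (fun i hi => by
            have hle : i ≤ N + c := by
              have := Finset.mem_Ico.mp hi; omega
            exact le_trans h1 (anti μ hle))
    omega
  intro i hi
  exact Nat.le_zero.mp (key ▸ anti μ (by omega : N + c ≤ i))

lemma sup_bound {lam μ : Ptn} {c : ℕ} (h : PtnSub lam μ) (hs : μ.size = lam.size + c) :
    ∀ i, μ.parts i ≤ lam.parts 0 + c := by
  have key : μ.parts 0 ≤ lam.parts 0 + c := by
    set M' := bnd lam + c with hM'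
    have hzμ : ∀ i, M' + 1 ≤ i → μ.parts i = 0 := fun i hi => sup_zero h hs i (by omega)
    have hzl : ∀ i, M' + 1 ≤ i → lam.parts i = 0 := fun i hi => bnd_spec lam i (by omega)
    have e1 : μ.size = (∑ i ∈ Finset.range M', μ.parts (i + 1)) + μ.parts 0 := by
      rw [size_eq μ (M' + 1) hzμ]; unfold psum; rw [Finset.sum_range_succ']
    have e2 : lam.size = (∑ i ∈ Finset.range M', lam.parts (i + 1)) + lam.parts 0 := by
      rw [size_eq lam (M' + 1) hzl]; unfold psum; rw [Finset.sum_range_succ']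
    have e3 : (∑ i ∈ Finset.range M', lam.parts (i + 1)) ≤
        ∑ i ∈ Finset.range M', μ.parts (i + 1) :=
      Finset.sum_le_sum (fun i _ => h (i + 1))
    omega
  exact fun i => le_trans (anti μ (Nat.zero_le i)) key

lemma fin_sup (lam : Ptn) (c : ℕ) :
    {μ : Ptn | PtnSub lam μ ∧ μ.size = lam.size + c}.Finite := by
  apply fin_of_bounds _ (bnd lam + c) (lam.parts 0 + c)
  · exact fun μ hμ i hi => sup_zero hμ.1 hμ.2 i hi
  · exact fun μ hμ i => sup_bound hμ.1 hμ.2 i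

lemma fin_HS (c : ℕ) (lam : Ptn) : {mu : Ptn | HS c lam mu}.Finite :=
  (fin_sub lam).subset (fun _ hμ => hμ.1)

lemma fin_VSup (c : ℕ) (nu : Ptn) : {mu : Ptn | VS c mu nu}.Finite :=
  (fin_sup nu c).subset (fun _ hμ => ⟨hμ.1, hμ.2.1⟩)

noncomputable def HSF (c : ℕ) (lam : Ptn) : Finset Ptn := (fin_HS c lam).toFinset

noncomputable def VSF (c : ℕ) (nu : Ptn) : Finset Ptn := (fin_VSup c nu).toFinset

@[simp] lemma mem_HSF {c : ℕ} {lam mu : Ptn} : mu ∈ HSF c lam ↔ HS c lam mu :=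
  Set.Finite.mem_toFinset _

@[simp] lemma mem_VSF {c : ℕ} {nu mu : Ptn} : mu ∈ VSF c nu ↔ VS c mu nu :=
  Set.Finite.mem_toFinset _

noncomputable def UpF (nu rho : Ptn) (c k : ℕ) : Finset Ptn :=
  ((fin_VSup c nu).subset (fun _ hμ => hμ.1) :
    {mu : Ptn | VS c mu nu ∧ HS k mu rho}.Finite).toFinset

noncomputable def DnF (nu rho : Ptn) (c k : ℕ) : Finset Ptn :=
  ((fin_HS k nu).subset (fun _ hμ => hμ.1) :
    {mu : Ptn | HS k nu mu ∧ VS c rho mu}.Finite).toFinset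

@[simp] lemma mem_UpF {nu rho mu : Ptn} {c k : ℕ} :
    mu ∈ UpF nu rho c k ↔ VS c mu nu ∧ HS k mu rho := Set.Finite.mem_toFinset _

@[simp] lemma mem_DnF {nu rho mu : Ptn} {c k : ℕ} :
    mu ∈ DnF nu rho c k ↔ HS k nu mu ∧ VS c rho mu := Set.Finite.mem_toFinset _

end BP
namespace BP

lemma Mh_eq (k : ℤ) (P : Ptn → ℚ) (lam : Ptn) :
    Mh ℚ k P lam = if k < 0 then 0 else ∑ μ ∈ HSF k.toNat lam, P μ := by
  unfold Mh
  split_ifs with h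
  · rfl
  · have h1 : ∑ᶠ (mu : Ptn) (_ : HS k.toNat lam mu), P mu
        = ∑ᶠ mu ∈ {x : Ptn | HS k.toNat lam x}, P mu := rfl
    rw [h1, ← Set.Finite.coe_toFinset (fin_HS k.toNat lam), finsum_mem_coe_finset]
    rfl

lemma eperp_eq (c : ℕ) (P : Ptn → ℚ) (nu : Ptn) :
    eperp ℚ c P nu = ∑ μ ∈ VSF c nu, P μ := by
  unfold eperp
  have h1 : ∑ᶠ (mu : Ptn) (_ : VS c mu nu), P mu
      = ∑ᶠ mu ∈ {x : Ptn | VS c x nu}, P mu := rfl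
  rw [h1, ← Set.Finite.coe_toFinset (fin_VSup c nu), finsum_mem_coe_finset]
  rfl

lemma Mh_congr {k : ℤ} {f g : Ptn → ℚ} (lam : Ptn) (h : ∀ x, f x = g x) :
    Mh ℚ k f lam = Mh ℚ k g lam := by
  rw [Mh_eq, Mh_eq]; split_ifs with h'
  · rfl
  · exact Finset.sum_congr rfl (fun μ _ => h μ)

lemma eperp_congr {c : ℕ} {f g : Ptn → ℚ} (nu : Ptn) (h : ∀ x, f x = g x) :
    eperp ℚ c f nu = eperp ℚ c g nu := by
  rw [eperp_eq, eperp_eq]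
  exact Finset.sum_congr rfl (fun μ _ => h μ)

lemma Mh_zero (k : ℤ) (lam : Ptn) : Mh ℚ k (fun _ => 0) lam = 0 := by
  rw [Mh_eq]; split_ifs
  · rfl
  · exact Finset.sum_const_zero

lemma Mh_add (k : ℤ) (f g : Ptn → ℚ) (lam : Ptn) :
    Mh ℚ k (fun x => f x + g x) lam = Mh ℚ k f lam + Mh ℚ k g lam := by
  rw [Mh_eq, Mh_eq, Mh_eq]; split_ifs
  · rw [add_zero]
  · exact Finset.sum_add_distrib

lemma Mh_sum {ι : Type*} (s : Finset ι) (k : ℤ) (f : ι → Ptn → ℚ) (lam : Ptn) :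
    Mh ℚ k (fun x => ∑ d ∈ s, f d x) lam = ∑ d ∈ s, Mh ℚ k (f d) lam := by
  rw [Mh_eq]
  split_ifs with h'
  · rw [eq_comm]
    exact Finset.sum_eq_zero (fun d _ => by rw [Mh_eq, if_pos h'])
  · rw [Finset.sum_comm]
    exact Finset.sum_congr rfl (fun d _ => by rw [Mh_eq, if_neg h'])

lemma Mh_smul (k : ℤ) (r : ℚ) (f : Ptn → ℚ) (lam : Ptn) :
    Mh ℚ k (fun x => r * f x) lam = r * Mh ℚ k f lam := by
  rw [Mh_eq, Mh_eq]; split_ifs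
  · rw [mul_zero]
  · rw [Finset.mul_sum]

lemma eperp_zero (c : ℕ) (nu : Ptn) : eperp ℚ c (fun _ => 0) nu = 0 := by
  rw [eperp_eq]; exact Finset.sum_const_zero

lemma eperp_add (c : ℕ) (f g : Ptn → ℚ) (nu : Ptn) :
    eperp ℚ c (fun x => f x + g x) nu = eperp ℚ c f nu + eperp ℚ c g nu := by
  rw [eperp_eq, eperp_eq, eperp_eq]; exact Finset.sum_add_distrib

lemma eperp_sum {ι : Type*} (s : Finset ι) (c : ℕ) (f : ι → Ptn → ℚ) (nu : Ptn) :
    eperp ℚ c (fun x => ∑ d ∈ s, f d x) nu = ∑ d ∈ s, eperp ℚ c (f d) nu := by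
  rw [eperp_eq, Finset.sum_comm]
  exact Finset.sum_congr rfl (fun d _ => by rw [eperp_eq])

lemma eperp_smul (c : ℕ) (r : ℚ) (f : Ptn → ℚ) (nu : Ptn) :
    eperp ℚ c (fun x => r * f x) nu = r * eperp ℚ c f nu := by
  rw [eperp_eq, eperp_eq, Finset.mul_sum]

lemma eperp_bound_zero {Q : Ptn → ℚ} {t : ℕ} (hQ : ∀ μ, Q μ ≠ 0 → μ.size ≤ t)
    {c : ℕ} (hc : t < c) (nu : Ptn) : eperp ℚ c Q nu = 0 := by
  rw [eperp_eq]
  apply Finset.sum_eq_zero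
  intro μ hμ
  rw [mem_VSF] at hμ
  by_contra hne
  have := hQ μ hne
  have := hμ.2.1
  omega

lemma Mh_ne_zero_ex {k : ℤ} {Q : Ptn → ℚ} {lam : Ptn} (h : Mh ℚ k Q lam ≠ 0) :
    ∃ μ, HS k.toNat lam μ ∧ Q μ ≠ 0 ∧ 0 ≤ k := by
  rw [Mh_eq] at h
  split_ifs at h with h'
  · exact absurd rfl h
  · obtain ⟨μ, hμ, hne⟩ := Finset.exists_ne_zero_of_sum_ne_zero h
    exact ⟨μ, mem_HSF.mp hμ, hne, by omega⟩

lemma eperp_ne_zero_ex {c : ℕ} {Q : Ptn → ℚ} {nu : Ptn} (h : eperp ℚ c Q nu ≠ 0) :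
    ∃ μ, VS c μ nu ∧ Q μ ≠ 0 := by
  rw [eperp_eq] at h
  obtain ⟨μ, hμ, hne⟩ := Finset.exists_ne_zero_of_sum_ne_zero h
  exact ⟨μ, mem_VSF.mp hμ, hne⟩

lemma Sop_eq (m : ℤ) (Q : Ptn → ℚ) (t : ℕ) (hQ : ∀ μ, Q μ ≠ 0 → μ.size ≤ t)
    (C : ℕ) (hC : t < C) (lam : Ptn) :
    Sop ℚ m Q lam = ∑ c ∈ Finset.range C, (-1:ℚ)^c * Mh ℚ (m + c) (eperp ℚ c Q) lam := by
  unfold Sop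
  apply finsum_eq_finset_sum_of_support_subset
  intro c hc
  simp only [Function.mem_support] at hc
  simp only [Finset.coe_range, Set.mem_Iio]
  by_contra hcC
  apply hc
  have h0 : Mh ℚ (m + c) (eperp ℚ c Q) lam = 0 := by
    rw [Mh_congr lam (fun x => eperp_bound_zero hQ (by omega : t < c) x), Mh_zero]
  rw [h0, mul_zero]

lemma supp_size_Sop {P : Ptn → ℚ} {t : ℕ} (hP : ∀ μ, P μ ≠ 0 → μ.size ≤ t) (m : ℤ) :
    ∀ lam, Sop ℚ m P lam ≠ 0 → lam.size ≤ t + m.toNat := by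
  intro lam h
  unfold Sop at h
  obtain ⟨c, hc⟩ : ∃ c : ℕ, (-1:ℚ)^c * Mh ℚ (m + c) (eperp ℚ c P) lam ≠ 0 := by
    by_contra hall
    push_neg at hall
    exact h (finsum_eq_zero_of_forall_eq_zero hall)
  have h2 : Mh ℚ (m + c) (eperp ℚ c P) lam ≠ 0 := fun h0 => hc (by rw [h0, mul_zero])
  obtain ⟨μ, hμHS, hμne, hk⟩ := Mh_ne_zero_ex h2
  obtain ⟨ν, hνVS, hνne⟩ := eperp_ne_zero_ex hμne
  have e1 : lam.size = μ.size + (m + c).toNat := hμHS.2.1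
  have e2 : ν.size = μ.size + c := hνVS.2.1
  have e3 : ν.size ≤ t := hP ν hνne
  omega

end BP
namespace BP

def rL (lam nu : Ptn) (i : ℕ) : ℕ := max (nu.parts i) (lam.parts (i+1))
def rU (lam nu : Ptn) (i : ℕ) : ℕ :=
  if i = 0 then lam.parts 0 else min (lam.parts i) (nu.parts (i-1))

lemma rU_le (lam nu : Ptn) (i : ℕ) : rU lam nu i ≤ lam.parts i := by
  unfold rU; split_ifs with h
  · subst h; exact le_refl _
  · exact min_le_left _ _

lemma rU_succ_le_nu (lam nu : Ptn) (i : ℕ) : rU lam nu (i+1) ≤ nu.parts i := by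
  unfold rU
  simp only [Nat.add_sub_cancel, if_neg (Nat.succ_ne_zero i)]
  exact min_le_right _ _

lemma rU_succ_le_rL (lam nu : Ptn) (i : ℕ) : rU lam nu (i+1) ≤ rL lam nu i := by
  unfold rL
  exact le_trans (rU_succ_le_nu lam nu i) (le_max_left _ _)

lemma rU_zero (lam nu : Ptn) {i : ℕ} (hi : bnd lam ≤ i) : rU lam nu i = 0 := by
  unfold rU; split_ifs with h
  · subst h; exact bnd_spec lam 0 hi
  · have := bnd_spec lam i hi; omega

lemma box_of_chain {lam mu nu : Ptn} {A B : ℕ} (h1 : HS A lam mu) (h2 : HS B mu nu) :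
    ∀ i, rL lam nu i ≤ mu.parts i ∧ mu.parts i ≤ rU lam nu i := by
  intro i
  constructor
  · exact max_le (h2.1 i) (h1.2.2 i)
  · unfold rU; split_ifs with h0
    · subst h0; exact h1.1 0
    · obtain ⟨j, rfl⟩ : ∃ j, i = j + 1 := ⟨i - 1, by omega⟩
      simp only [Nat.add_sub_cancel]
      exact le_min (h1.1 (j+1)) (h2.2.2 j)

lemma sum_LU (lam nu : Ptn) (hnl : PtnSub nu lam) (M' : ℕ)
    (hz : ∀ i, M' ≤ i → lam.parts i = 0) :
    ∑ i ∈ Finset.range (M'+1), (rL lam nu i + rU lam nu i)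
      = psum lam.parts (M'+1) + psum nu.parts (M'+1) := by
  have hnz : ∀ i, M' ≤ i → nu.parts i = 0 := fun i hi => sub_zero hnl (hz i hi)
  have h1 : ∑ i ∈ Finset.range (M'+1), (rL lam nu i + rU lam nu i)
      = (∑ i ∈ Finset.range (M'+1), rL lam nu i)
        + (∑ i ∈ Finset.range (M'+1), rU lam nu i) := Finset.sum_add_distrib
  have h2 : ∑ i ∈ Finset.range (M'+1), rL lam nu i = ∑ i ∈ Finset.range M', rL lam nu i := by
    rw [Finset.sum_range_succ]
    have : rL lam nu M' = 0 := by
      unfold rL; have := hnz M' (le_refl _); have := hz (M'+1) (by omega); omega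
    omega
  have h3 : ∑ i ∈ Finset.range (M'+1), rU lam nu i
      = (∑ i ∈ Finset.range M', rU lam nu (i+1)) + lam.parts 0 := by
    rw [Finset.sum_range_succ']; rfl
  have h4 : (∑ i ∈ Finset.range M', rL lam nu i) + (∑ i ∈ Finset.range M', rU lam nu (i+1))
      = ∑ i ∈ Finset.range M', (nu.parts i + lam.parts (i+1)) := by
    rw [← Finset.sum_add_distrib]
    apply Finset.sum_congr rfl
    intro i _
    have e : rU lam nu (i+1) = min (lam.parts (i+1)) (nu.parts i) := by
      unfold rU; simp
    rw [e]; unfold rL; omega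
  have h5 : psum lam.parts (M'+1) = (∑ i ∈ Finset.range M', lam.parts (i+1)) + lam.parts 0 := by
    unfold psum; rw [Finset.sum_range_succ']
  have h6 : psum nu.parts (M'+1) = ∑ i ∈ Finset.range M', nu.parts i := by
    unfold psum; rw [Finset.sum_range_succ]
    have := hnz M' (le_refl _); omega
  have h7 : ∑ i ∈ Finset.range M', (nu.parts i + lam.parts (i+1))
      = (∑ i ∈ Finset.range M', nu.parts i) + (∑ i ∈ Finset.range M', lam.parts (i+1)) :=
    Finset.sum_add_distrib
  omega

lemma refl_main {lam mu nu : Ptn} {A B : ℕ} (h1 : HS A lam mu) (h2 : HS B mu nu) :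
    ∃ mu' : Ptn, (∀ i, mu'.parts i = rL lam nu i + (rU lam nu i - mu.parts i)) ∧
      HS B lam mu' ∧ HS A mu' nu := by
  have box := box_of_chain h1 h2
  set p' : ℕ → ℕ := fun i => rL lam nu i + (rU lam nu i - mu.parts i) with hp'
  have hbounds : ∀ i, rL lam nu i ≤ p' i ∧ p' i ≤ rU lam nu i := by
    intro i; have := box i; simp only [hp']; omega
  have hanti : ∀ i, p' (i+1) ≤ p' i := fun i =>
    le_trans (hbounds (i+1)).2 (le_trans (rU_succ_le_rL lam nu i) (hbounds i).1)
  have hzero : ∀ i, bnd lam ≤ i → p' i = 0 := by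
    intro i hi
    have h0 := rU_zero lam (nu := nu) hi
    have := (hbounds i).1
    have := (hbounds i).2
    omega
  set mu' : Ptn := ⟨p', hanti, ⟨bnd lam, hzero⟩⟩ with hmu'
  set M' := bnd lam with hM'
  have hml : PtnSub mu lam := h1.1
  have hnm : PtnSub nu mu := h2.1
  have hnl : PtnSub nu lam := fun i => le_trans (hnm i) (hml i)
  have hzl : ∀ i, M' + 1 ≤ i → lam.parts i = 0 := fun i hi => bnd_spec lam i (by omega)
  have hzm : ∀ i, M' + 1 ≤ i → mu.parts i = 0 := fun i hi => sub_zero hml (hzl i hi)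
  have hzn : ∀ i, M' + 1 ≤ i → nu.parts i = 0 := fun i hi => sub_zero hnl (hzl i hi)
  have hzmu' : ∀ i, M' + 1 ≤ i → mu'.parts i = 0 := fun i hi => hzero i (by omega)
  have sl : lam.size = psum lam.parts (M'+1) := size_eq lam _ hzl
  have sm : mu.size = psum mu.parts (M'+1) := size_eq mu _ hzm
  have sn : nu.size = psum nu.parts (M'+1) := size_eq nu _ hzn
  have smu' : mu'.size = psum p' (M'+1) := size_eq mu' _ hzmu'
  have key : psum p' (M'+1) + psum mu.parts (M'+1)
      = psum lam.parts (M'+1) + psum nu.parts (M'+1) := by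
    rw [← sum_LU lam nu hnl M' (fun i hi => bnd_spec lam i hi)]
    unfold psum
    rw [← Finset.sum_add_distrib]
    apply Finset.sum_congr rfl
    intro i _
    have := box i
    simp only [hp']
    omega
  have szl : lam.size = mu.size + A := h1.2.1
  have szm : mu.size = nu.size + B := h2.2.1
  refine ⟨mu', fun i => rfl, ⟨?_, ?_, ?_⟩, ⟨?_, ?_, ?_⟩⟩
  · exact fun i => le_trans (hbounds i).2 (rU_le lam nu i)
  · omega
  · exact fun i => le_trans (le_max_right _ _) (hbounds i).1
  · exact fun i => le_trans (le_max_left _ _) (hbounds i).1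
  · omega
  · exact fun i => le_trans (hbounds (i+1)).2 (rU_succ_le_nu lam nu i)

lemma refl_invol {lam mu nu : Ptn} {A B : ℕ} (h1 : HS A lam mu) (h2 : HS B mu nu)
    (mu' : Ptn) (hp : ∀ i, mu'.parts i = rL lam nu i + (rU lam nu i - mu.parts i)) :
    ∀ i, rL lam nu i + (rU lam nu i - mu'.parts i) = mu.parts i := by
  intro i
  have := box_of_chain h1 h2 i
  rw [hp i]
  omega

noncomputable def reflFn {lam nu : Ptn} {A B : ℕ} (mu : Ptn)
    (h1 : HS A lam mu) (h2 : HS B mu nu) : Ptn := (refl_main h1 h2).choose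

lemma reflFn_parts {lam nu : Ptn} {A B : ℕ} (mu : Ptn) (h1 : HS A lam mu) (h2 : HS B mu nu) :
    ∀ i, (reflFn mu h1 h2).parts i = rL lam nu i + (rU lam nu i - mu.parts i) :=
  (refl_main h1 h2).choose_spec.1

lemma reflFn_hs1 {lam nu : Ptn} {A B : ℕ} (mu : Ptn) (h1 : HS A lam mu) (h2 : HS B mu nu) :
    HS B lam (reflFn mu h1 h2) := (refl_main h1 h2).choose_spec.2.1

lemma reflFn_hs2 {lam nu : Ptn} {A B : ℕ} (mu : Ptn) (h1 : HS A lam mu) (h2 : HS B mu nu) :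
    HS A (reflFn mu h1 h2) nu := (refl_main h1 h2).choose_spec.2.2

lemma reflFn_invol {lam nu : Ptn} {A B : ℕ} (mu : Ptn) (h1 : HS A lam mu) (h2 : HS B mu nu)
    (h1' : HS B lam (reflFn mu h1 h2)) (h2' : HS A (reflFn mu h1 h2) nu) :
    reflFn (reflFn mu h1 h2) h1' h2' = mu := by
  apply ptn_ext; funext i
  rw [reflFn_parts _ h1' h2' i]
  exact refl_invol h1 h2 _ (reflFn_parts mu h1 h2) i

lemma sigma_eq {x y b : Ptn} (h : x = y) : (⟨x, b⟩ : Σ _ : Ptn, Ptn) = ⟨y, b⟩ := by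
  subst h; rfl

lemma hh_chain_swap (A B : ℕ) (f : Ptn → ℚ) (lam : Ptn) :
    ∑ μ ∈ HSF A lam, ∑ ν ∈ HSF B μ, f ν = ∑ μ ∈ HSF B lam, ∑ ν ∈ HSF A μ, f ν := by
  rw [Finset.sum_sigma' (HSF A lam) (fun μ => HSF B μ) (fun _ ν => f ν),
      Finset.sum_sigma' (HSF B lam) (fun μ => HSF A μ) (fun _ ν => f ν)]
  refine Finset.sum_bij'
    (fun (p : Σ _ : Ptn, Ptn) hp =>
      (⟨reflFn p.1 (mem_HSF.mp (Finset.mem_sigma.mp hp).1)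
        (mem_HSF.mp (Finset.mem_sigma.mp hp).2), p.2⟩ : Σ _ : Ptn, Ptn))
    (fun (q : Σ _ : Ptn, Ptn) hq =>
      (⟨reflFn q.1 (mem_HSF.mp (Finset.mem_sigma.mp hq).1)
        (mem_HSF.mp (Finset.mem_sigma.mp hq).2), q.2⟩ : Σ _ : Ptn, Ptn))
    ?_ ?_ ?_ ?_ ?_
  · intro p hp
    have h1 := mem_HSF.mp (Finset.mem_sigma.mp hp).1
    have h2 := mem_HSF.mp (Finset.mem_sigma.mp hp).2
    rw [Finset.mem_sigma]
    exact ⟨mem_HSF.mpr (reflFn_hs1 p.1 h1 h2), mem_HSF.mpr (reflFn_hs2 p.1 h1 h2)⟩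
  · intro q hq
    have h1 := mem_HSF.mp (Finset.mem_sigma.mp hq).1
    have h2 := mem_HSF.mp (Finset.mem_sigma.mp hq).2
    rw [Finset.mem_sigma]
    exact ⟨mem_HSF.mpr (reflFn_hs1 q.1 h1 h2), mem_HSF.mpr (reflFn_hs2 q.1 h1 h2)⟩
  · rintro ⟨p1, p2⟩ hp
    have h1 := mem_HSF.mp (Finset.mem_sigma.mp hp).1
    have h2 := mem_HSF.mp (Finset.mem_sigma.mp hp).2
    exact sigma_eq (reflFn_invol p1 h1 h2 (reflFn_hs1 p1 h1 h2) (reflFn_hs2 p1 h1 h2))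
  · rintro ⟨q1, q2⟩ hq
    have h1 := mem_HSF.mp (Finset.mem_sigma.mp hq).1
    have h2 := mem_HSF.mp (Finset.mem_sigma.mp hq).2
    exact sigma_eq (reflFn_invol q1 h1 h2 (reflFn_hs1 q1 h1 h2) (reflFn_hs2 q1 h1 h2))
  · intro p hp
    rfl

lemma Mh_comm (a b : ℤ) (f : Ptn → ℚ) (lam : Ptn) :
    Mh ℚ a (Mh ℚ b f) lam = Mh ℚ b (Mh ℚ a f) lam := by
  rw [Mh_eq, Mh_eq]
  by_cases ha : a < 0 <;> by_cases hb : b < 0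
  · rw [if_pos ha, if_pos hb]
  · rw [if_pos ha, if_neg hb]
    rw [eq_comm]
    exact Finset.sum_eq_zero (fun μ _ => by rw [Mh_eq, if_pos ha])
  · rw [if_neg ha, if_pos hb]
    exact Finset.sum_eq_zero (fun μ _ => by rw [Mh_eq, if_pos hb])
  · rw [if_neg ha, if_neg hb]
    have e1 : ∀ μ, Mh ℚ b f μ = ∑ ν ∈ HSF b.toNat μ, f ν :=
      fun μ => by rw [Mh_eq, if_neg hb]
    have e2 : ∀ μ, Mh ℚ a f μ = ∑ ν ∈ HSF a.toNat μ, f ν :=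
      fun μ => by rw [Mh_eq, if_neg ha]
    calc ∑ μ ∈ HSF a.toNat lam, Mh ℚ b f μ
        = ∑ μ ∈ HSF a.toNat lam, ∑ ν ∈ HSF b.toNat μ, f ν :=
          Finset.sum_congr rfl (fun μ _ => e1 μ)
      _ = ∑ μ ∈ HSF b.toNat lam, ∑ ν ∈ HSF a.toNat μ, f ν := hh_chain_swap _ _ f lam
      _ = ∑ μ ∈ HSF b.toNat lam, Mh ℚ a f μ :=
          Finset.sum_congr rfl (fun μ _ => (e2 μ).symm)

end BP
namespace BP

noncomputable def cpart (μ : Ptn) (i : ℕ) : ℕ := sInf {n | μ.parts n ≤ i}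

lemma cpart_lt_iff (μ : Ptn) (i j : ℕ) : j < cpart μ i ↔ i < μ.parts j := by
  have hne : {n | μ.parts n ≤ i}.Nonempty := ⟨bnd μ, by
    simp only [Set.mem_setOf_eq, bnd_spec μ _ le_rfl]; omega⟩
  unfold cpart
  constructor
  · intro h
    by_contra hc
    push_neg at hc
    have h2 : sInf {n | μ.parts n ≤ i} ≤ j := Nat.sInf_le hc
    omega
  · intro h
    by_contra hc
    push_neg at hc
    have hmem := Nat.sInf_mem hne
    simp only [Set.mem_setOf_eq] at hmem
    have : μ.parts j ≤ μ.parts (sInf {n | μ.parts n ≤ i}) := anti μ hc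
    omega

lemma cpart_anti (μ : Ptn) : ∀ i, cpart μ (i+1) ≤ cpart μ i := by
  intro i
  by_contra h
  push_neg at h
  have h1 := (cpart_lt_iff μ (i+1) (cpart μ i)).mp h
  have h2 := (cpart_lt_iff μ i (cpart μ i)).mpr (by omega)
  omega

lemma cpart_zero (μ : Ptn) : ∀ i, μ.parts 0 ≤ i → cpart μ i = 0 := by
  intro i hi
  by_contra h
  have h1 := (cpart_lt_iff μ i 0).mp (by omega)
  omega

noncomputable def conj (μ : Ptn) : Ptn := ⟨cpart μ, cpart_anti μ, ⟨μ.parts 0, cpart_zero μ⟩⟩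

lemma conj_parts (μ : Ptn) : (conj μ).parts = cpart μ := rfl

lemma conj_lt_iff (μ : Ptn) (i j : ℕ) : j < (conj μ).parts i ↔ i < μ.parts j :=
  cpart_lt_iff μ i j

lemma conj_conj (μ : Ptn) : conj (conj μ) = μ := by
  apply ptn_ext
  funext j
  have key : ∀ x, x < (conj (conj μ)).parts j ↔ x < μ.parts j := by
    intro x
    rw [conj_lt_iff, conj_lt_iff]
  have h1 := key ((conj (conj μ)).parts j)
  have h2 := key (μ.parts j)
  omega

lemma conj_sub {ν μ : Ptn} (h : PtnSub ν μ) : PtnSub (conj ν) (conj μ) := by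
  intro i
  by_contra hc
  push_neg at hc
  have h1 := (conj_lt_iff ν i ((conj μ).parts i)).mp hc
  have h3 := h ((conj μ).parts i)
  have h2 := (conj_lt_iff μ i ((conj μ).parts i)).mpr (by omega)
  omega

lemma sum_ind (t M : ℕ) (h : t ≤ M) :
    ∑ i ∈ Finset.range M, (if i < t then 1 else 0) = t := by
  have e : (Finset.range M).filter (fun i => i < t) = Finset.range t := by
    ext x
    simp only [Finset.mem_filter, Finset.mem_range]
    omega
  rw [← Finset.card_filter, e, Finset.card_range]

lemma cpart_le_bnd (μ : Ptn) (i : ℕ) : cpart μ i ≤ bnd μ := by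
  by_contra h
  have := (cpart_lt_iff μ i (bnd μ)).mp (by omega)
  rw [bnd_spec μ _ le_rfl] at this
  omega

lemma conj_size (μ : Ptn) : (conj μ).size = μ.size := by
  set M := max (bnd μ) (μ.parts 0) + 1 with hM
  have hzμ : ∀ i, M ≤ i → μ.parts i = 0 := fun i hi => bnd_spec μ i (by omega)
  have hzc : ∀ i, M ≤ i → (conj μ).parts i = 0 := fun i hi => cpart_zero μ i (by omega)
  rw [size_eq μ M hzμ, size_eq (conj μ) M hzc]
  unfold psum
  have e1 : ∀ i, (conj μ).parts i = ∑ j ∈ Finset.range M, (if i < μ.parts j then 1 else 0) := by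
    intro i
    have e : (Finset.range M).filter (fun j => i < μ.parts j) = Finset.range (cpart μ i) := by
      ext x
      simp only [Finset.mem_filter, Finset.mem_range]
      constructor
      · rintro ⟨_, hx⟩; exact (cpart_lt_iff μ i x).mpr hx
      · intro hx
        have h1 := (cpart_lt_iff μ i x).mp hx
        have h2 := cpart_le_bnd μ i
        exact ⟨by omega, h1⟩
    rw [← Finset.card_filter, e, Finset.card_range]
    rfl
  calc ∑ i ∈ Finset.range M, (conj μ).parts i
      = ∑ i ∈ Finset.range M, ∑ j ∈ Finset.range M, (if i < μ.parts j then 1 else 0) :=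
        Finset.sum_congr rfl (fun i _ => e1 i)
    _ = ∑ j ∈ Finset.range M, ∑ i ∈ Finset.range M, (if i < μ.parts j then 1 else 0) :=
        Finset.sum_comm
    _ = ∑ j ∈ Finset.range M, μ.parts j :=
        Finset.sum_congr rfl (fun j _ => sum_ind _ _ (by
          have := parts_le_zero μ j; omega))

lemma conj_hs_to_vs {c : ℕ} {lam mu : Ptn} (h : HS c lam mu) : VS c (conj lam) (conj mu) := by
  obtain ⟨hsub, hsz, hrow⟩ := h
  refine ⟨conj_sub hsub, by rw [conj_size, conj_size]; exact hsz, ?_⟩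
  intro i
  by_contra hc
  push_neg at hc
  have h1 := (conj_lt_iff lam i ((conj mu).parts i + 1)).mp (by omega)
  have h2 := hrow ((conj mu).parts i)
  have h3 : ¬ ((conj mu).parts i < (conj mu).parts i) := lt_irrefl _
  have h4 : ¬ (i < mu.parts ((conj mu).parts i)) := fun hh =>
    h3 ((conj_lt_iff mu i ((conj mu).parts i)).mpr hh)
  omega

lemma conj_vs_to_hs {c : ℕ} {lam mu : Ptn} (h : VS c lam mu) : HS c (conj lam) (conj mu) := by
  obtain ⟨hsub, hsz, hcol⟩ := h
  refine ⟨conj_sub hsub, by rw [conj_size, conj_size]; exact hsz, ?_⟩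
  intro i
  by_contra hc
  push_neg at hc
  have h1 := (conj_lt_iff lam (i+1) ((conj mu).parts i)).mp (by omega)
  have h2 := hcol ((conj mu).parts i)
  have h3 : ¬ ((conj mu).parts i < (conj mu).parts i) := lt_irrefl _
  have h4 : ¬ (i < mu.parts ((conj mu).parts i)) := fun hh =>
    h3 ((conj_lt_iff mu i ((conj mu).parts i)).mpr hh)
  omega

end BP
namespace BP

lemma reflFn_congr {lam nu : Ptn} {A B : ℕ} {mu mu' : Ptn} (e : mu = mu')
    (h1 : HS A lam mu) (h2 : HS B mu nu)
    (h1' : HS A lam mu') (h2' : HS B mu' nu) :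
    reflFn mu h1 h2 = reflFn mu' h1' h2' := by
  subst e; rfl

noncomputable def vswapFn (nu : Ptn) {c d : ℕ} (mu rho : Ptn)
    (h1 : VS c mu nu) (h2 : VS d rho mu) : Ptn :=
  conj (reflFn (conj mu) (conj_vs_to_hs h2) (conj_vs_to_hs h1))

lemma vswap_vs1 (nu : Ptn) {c d : ℕ} (mu rho : Ptn) (h1 : VS c mu nu) (h2 : VS d rho mu) :
    VS d (vswapFn nu mu rho h1 h2) nu := by
  have h := conj_hs_to_vs (reflFn_hs2 (conj mu) (conj_vs_to_hs h2) (conj_vs_to_hs h1))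
  rwa [conj_conj] at h

lemma vswap_vs2 (nu : Ptn) {c d : ℕ} (mu rho : Ptn) (h1 : VS c mu nu) (h2 : VS d rho mu) :
    VS c rho (vswapFn nu mu rho h1 h2) := by
  have h := conj_hs_to_vs (reflFn_hs1 (conj mu) (conj_vs_to_hs h2) (conj_vs_to_hs h1))
  rwa [conj_conj] at h

lemma vswap_invol (nu : Ptn) {c d : ℕ} (mu rho : Ptn) (h1 : VS c mu nu) (h2 : VS d rho mu)
    (h1' : VS d (vswapFn nu mu rho h1 h2) nu) (h2' : VS c rho (vswapFn nu mu rho h1 h2)) :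
    vswapFn nu (vswapFn nu mu rho h1 h2) rho h1' h2' = mu := by
  have step : reflFn (conj (vswapFn nu mu rho h1 h2)) (conj_vs_to_hs h2') (conj_vs_to_hs h1')
      = reflFn (reflFn (conj mu) (conj_vs_to_hs h2) (conj_vs_to_hs h1))
          (reflFn_hs1 (conj mu) (conj_vs_to_hs h2) (conj_vs_to_hs h1))
          (reflFn_hs2 (conj mu) (conj_vs_to_hs h2) (conj_vs_to_hs h1)) :=
    reflFn_congr (conj_conj _) _ _ _ _
  show conj (reflFn (conj (vswapFn nu mu rho h1 h2)) (conj_vs_to_hs h2') (conj_vs_to_hs h1')) = mu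
  rw [step, reflFn_invol (conj mu) (conj_vs_to_hs h2) (conj_vs_to_hs h1) _ _]
  exact conj_conj mu

lemma vs_chain_swap (c d : ℕ) (f : Ptn → ℚ) (nu : Ptn) :
    ∑ μ ∈ VSF c nu, ∑ ρ ∈ VSF d μ, f ρ = ∑ μ ∈ VSF d nu, ∑ ρ ∈ VSF c μ, f ρ := by
  rw [Finset.sum_sigma' (VSF c nu) (fun μ => VSF d μ) (fun _ ρ => f ρ),
      Finset.sum_sigma' (VSF d nu) (fun μ => VSF c μ) (fun _ ρ => f ρ)]
  refine Finset.sum_bij'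
    (fun (p : Σ _ : Ptn, Ptn) hp =>
      (⟨vswapFn nu p.1 p.2 (mem_VSF.mp (Finset.mem_sigma.mp hp).1)
        (mem_VSF.mp (Finset.mem_sigma.mp hp).2), p.2⟩ : Σ _ : Ptn, Ptn))
    (fun (q : Σ _ : Ptn, Ptn) hq =>
      (⟨vswapFn nu q.1 q.2 (mem_VSF.mp (Finset.mem_sigma.mp hq).1)
        (mem_VSF.mp (Finset.mem_sigma.mp hq).2), q.2⟩ : Σ _ : Ptn, Ptn))
    ?_ ?_ ?_ ?_ ?_
  · intro p hp
    have h1 := mem_VSF.mp (Finset.mem_sigma.mp hp).1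
    have h2 := mem_VSF.mp (Finset.mem_sigma.mp hp).2
    rw [Finset.mem_sigma]
    exact ⟨mem_VSF.mpr (vswap_vs1 nu p.1 p.2 h1 h2), mem_VSF.mpr (vswap_vs2 nu p.1 p.2 h1 h2)⟩
  · intro q hq
    have h1 := mem_VSF.mp (Finset.mem_sigma.mp hq).1
    have h2 := mem_VSF.mp (Finset.mem_sigma.mp hq).2
    rw [Finset.mem_sigma]
    exact ⟨mem_VSF.mpr (vswap_vs1 nu q.1 q.2 h1 h2), mem_VSF.mpr (vswap_vs2 nu q.1 q.2 h1 h2)⟩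
  · rintro ⟨p1, p2⟩ hp
    have h1 := mem_VSF.mp (Finset.mem_sigma.mp hp).1
    have h2 := mem_VSF.mp (Finset.mem_sigma.mp hp).2
    exact sigma_eq (vswap_invol nu p1 p2 h1 h2 (vswap_vs1 nu p1 p2 h1 h2)
      (vswap_vs2 nu p1 p2 h1 h2))
  · rintro ⟨q1, q2⟩ hq
    have h1 := mem_VSF.mp (Finset.mem_sigma.mp hq).1
    have h2 := mem_VSF.mp (Finset.mem_sigma.mp hq).2
    exact sigma_eq (vswap_invol nu q1 q2 h1 h2 (vswap_vs1 nu q1 q2 h1 h2)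
      (vswap_vs2 nu q1 q2 h1 h2))
  · intro p hp
    rfl

lemma eperp_comm (c d : ℕ) (f : Ptn → ℚ) (nu : Ptn) :
    eperp ℚ c (eperp ℚ d f) nu = eperp ℚ d (eperp ℚ c f) nu := by
  rw [eperp_eq, eperp_eq]
  calc ∑ μ ∈ VSF c nu, eperp ℚ d f μ
      = ∑ μ ∈ VSF c nu, ∑ ρ ∈ VSF d μ, f ρ :=
        Finset.sum_congr rfl (fun μ _ => eperp_eq d f μ)
    _ = ∑ μ ∈ VSF d nu, ∑ ρ ∈ VSF c μ, f ρ := vs_chain_swap c d f nu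
    _ = ∑ μ ∈ VSF d nu, eperp ℚ c f μ :=
        Finset.sum_congr rfl (fun μ _ => (eperp_eq c f μ).symm)

end BP
namespace BP

def tA (nu rho : Ptn) (i : ℕ) : Prop :=
  rho.parts i ≤ nu.parts i ∧ (i = 0 ∨ nu.parts i < rho.parts (i-1))

def tB (nu rho : Ptn) (i : ℕ) : Prop :=
  rho.parts i ≤ nu.parts i ∧ nu.parts (i+1) < rho.parts i

noncomputable def Afin (nu rho : Ptn) (M : ℕ) : Finset ℕ :=
  (Finset.range M).filter (tA nu rho)

noncomputable def Bfin (nu rho : Ptn) (M : ℕ) : Finset ℕ :=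
  (Finset.range M).filter (tB nu rho)

def rdef (nu rho : Ptn) (M : ℕ) : ℕ := ∑ i ∈ Finset.range M, (rho.parts i - nu.parts i)

lemma card_AB (nu rho : Ptn) (M : ℕ)
    (hM : ∀ i, M - 1 ≤ i → nu.parts i = 0 ∧ rho.parts i = 0) (hM1 : 1 ≤ M)
    (H1 : ∀ i, rho.parts i ≤ nu.parts i + 1) :
    (Afin nu rho M).card = (Bfin nu rho M).card + 1 := by
  have key : ∀ K, 1 ≤ K →
      (∑ i ∈ Finset.range K, if tA nu rho i then 1 else 0)
        = (∑ i ∈ Finset.range (K-1), if tB nu rho i then 1 else 0)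
          + (if rho.parts (K-1) ≤ nu.parts (K-1) then 1 else 0) := by
    intro K
    induction K with
    | zero => exact fun h => absurd h (by omega)
    | succ K ih =>
      intro _
      by_cases hK : 1 ≤ K
      · have IH := ih hK
        rw [Finset.sum_range_succ, IH]
        have hK1 : K + 1 - 1 = K := by omega
        rw [hK1]
        obtain ⟨K', rfl⟩ : ∃ K', K = K' + 1 := ⟨K - 1, by omega⟩
        have hK2 : K' + 1 - 1 = K' := by omega
        rw [hK2, Finset.sum_range_succ (f := fun i => if tB nu rho i then 1 else 0) K']
        have h1 := H1 (K'+1)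
        have h2 := anti rho (by omega : K' ≤ K' + 1)
        have h3 := anti nu (by omega : K' ≤ K' + 1)
        simp only [tA, tB, Nat.add_sub_cancel, Nat.succ_ne_zero, false_or]
        by_cases ha : rho.parts K' ≤ nu.parts K' <;> by_cases hb : nu.parts (K' + 1) < rho.parts K' <;> by_cases hc : rho.parts (K' + 1) ≤ nu.parts (K' + 1) <;> simp [ha, hb, hc] <;> omega
      · have hK0 : K = 0 := by omega
        subst hK0
        rw [Finset.sum_range_one]
        have e0 : (1:ℕ) - 1 = 0 := rfl
        rw [e0]
        simp only [Finset.range_zero, Finset.sum_empty, zero_add]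
        by_cases t0 : rho.parts 0 ≤ nu.parts 0 <;> simp [tA, t0]
  have hA : (Afin nu rho M).card = ∑ i ∈ Finset.range M, if tA nu rho i then 1 else 0 :=
    Finset.card_filter _ _
  have hB : (Bfin nu rho M).card = ∑ i ∈ Finset.range M, if tB nu rho i then 1 else 0 :=
    Finset.card_filter _ _
  rw [hA, hB, key M hM1]
  obtain ⟨M', rfl⟩ : ∃ M', M = M' + 1 := ⟨M - 1, by omega⟩
  have hK2 : M' + 1 - 1 = M' := by omega
  rw [hK2, Finset.sum_range_succ (f := fun i => if tB nu rho i then 1 else 0) M']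
  have h1 := hM M' (by omega)
  have h2 : ¬ tB nu rho M' := by
    rintro ⟨_, hlt⟩
    omega
  rw [if_neg h2, if_pos (by omega : rho.parts M' ≤ nu.parts M')]

end BP
namespace BP

lemma cnt_up (nu rho : Ptn) (c k M : ℕ)
    (hM : ∀ i, M - 1 ≤ i → nu.parts i = 0 ∧ rho.parts i = 0) (hM1 : 1 ≤ M)
    (H1 : ∀ i, rho.parts i ≤ nu.parts i + 1) (H2 : ∀ i, nu.parts (i+1) ≤ rho.parts i)
    (hcompat : nu.size + c = rho.size + k) :
    (UpF nu rho c k).card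
      = ((Afin nu rho M).powerset.filter (fun S => S.card + rdef nu rho M = c)).card := by
  have hsa : nu.size = psum nu.parts M := size_eq nu M (fun j hj => (hM j (by omega)).1)
  have hsb : rho.size = psum rho.parts M := size_eq rho M (fun j hj => (hM j (by omega)).2)
  -- box facts
  have hup : ∀ μ : Ptn, VS c μ nu → HS k μ rho →
      (∀ j, max (nu.parts j) (rho.parts j) ≤ μ.parts j
          ∧ μ.parts j ≤ max (nu.parts j) (rho.parts j) + 1)
      ∧ (∀ j, M ≤ j → μ.parts j = 0)
      ∧ (∀ j, max (nu.parts j) (rho.parts j) < μ.parts j → tA nu rho j ∧ j < M) := by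
    intro μ hVS hHS
    obtain ⟨hsub1, hsz1, hcol⟩ := hVS
    obtain ⟨hsub2, hsz2, hrow⟩ := hHS
    have hbox : ∀ j, max (nu.parts j) (rho.parts j) ≤ μ.parts j
        ∧ μ.parts j ≤ max (nu.parts j) (rho.parts j) + 1 := by
      intro j
      have := hsub1 j
      have := hsub2 j
      have := hcol j
      have := H1 j
      omega
    have hz : ∀ j, M ≤ j → μ.parts j = 0 := by
      intro j hj
      obtain ⟨j', rfl⟩ : ∃ j', j = j' + 1 := ⟨j - 1, by omega⟩
      have h1 := hrow j'
      have h2 := (hM j' (by omega)).2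
      omega
    refine ⟨hbox, hz, ?_⟩
    intro j hfree
    have hb := hbox j
    have h1 := hcol j
    have hjM : j < M := by
      by_contra hc
      have := hz j (by omega)
      omega
    refine ⟨⟨by omega, ?_⟩, hjM⟩
    by_cases hj0 : j = 0
    · exact Or.inl hj0
    · right
      obtain ⟨j', rfl⟩ : ∃ j', j = j' + 1 := ⟨j - 1, by omega⟩
      have h2 := hrow j'
      simp only [Nat.add_sub_cancel]
      omega
  apply Finset.card_bij
    (fun μ _ => (Afin nu rho M).filter (fun j => max (nu.parts j) (rho.parts j) < μ.parts j))
  -- membership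
  · intro μ hμ
    rw [mem_UpF] at hμ
    obtain ⟨hbox, hz, hfree⟩ := hup μ hμ.1 hμ.2
    rw [Finset.mem_filter, Finset.mem_powerset]
    refine ⟨Finset.filter_subset _ _, ?_⟩
    have e1 : ((Afin nu rho M).filter
        (fun j => max (nu.parts j) (rho.parts j) < μ.parts j)).card
        = ∑ j ∈ Finset.range M,
            (if max (nu.parts j) (rho.parts j) < μ.parts j then 1 else 0) := by
      unfold Afin
      rw [Finset.filter_filter, Finset.card_filter]
      apply Finset.sum_congr rfl
      intro j hj
      by_cases hp : max (nu.parts j) (rho.parts j) < μ.parts j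
      · rw [if_pos ⟨(hfree j hp).1, hp⟩, if_pos hp]
      · rw [if_neg (fun hh => hp hh.2), if_neg hp]
    have e2 : psum μ.parts M = psum nu.parts M + (rdef nu rho M
        + ∑ j ∈ Finset.range M,
            (if max (nu.parts j) (rho.parts j) < μ.parts j then 1 else 0)) := by
      unfold psum rdef
      rw [← Finset.sum_add_distrib, ← Finset.sum_add_distrib]
      apply Finset.sum_congr rfl
      intro j _
      have := hbox j
      split_ifs <;> omega
    have e3 : μ.size = psum μ.parts M := size_eq μ M hz
    have e4 : μ.size = nu.size + c := hμ.1.2.1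
    omega
  -- injectivity
  · intro μ hμ ν hν heq
    rw [mem_UpF] at hμ hν
    obtain ⟨hboxμ, hzμ, hfreeμ⟩ := hup μ hμ.1 hμ.2
    obtain ⟨hboxν, hzν, hfreeν⟩ := hup ν hν.1 hν.2
    apply ptn_ext
    funext j
    by_cases hj : M ≤ j
    · rw [hzμ j hj, hzν j hj]
    · have hiff := Finset.ext_iff.mp heq j
      simp only [Finset.mem_filter] at hiff
      have hμA : max (nu.parts j) (rho.parts j) < μ.parts j → j ∈ Afin nu rho M := by
        intro hp
        unfold Afin
        rw [Finset.mem_filter, Finset.mem_range]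
        exact ⟨(hfreeμ j hp).2, (hfreeμ j hp).1⟩
      have hνA : max (nu.parts j) (rho.parts j) < ν.parts j → j ∈ Afin nu rho M := by
        intro hp
        unfold Afin
        rw [Finset.mem_filter, Finset.mem_range]
        exact ⟨(hfreeν j hp).2, (hfreeν j hp).1⟩
      have h1 := hboxμ j
      have h2 := hboxν j
      by_cases hpμ : max (nu.parts j) (rho.parts j) < μ.parts j <;>
        by_cases hpν : max (nu.parts j) (rho.parts j) < ν.parts j
      · omega
      · exact absurd (hiff.mp ⟨hμA hpμ, hpμ⟩).2 hpν
      · exact absurd (hiff.mpr ⟨hνA hpν, hpν⟩).2 hpμ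
      · omega
  -- surjectivity
  · intro S hS
    rw [Finset.mem_filter, Finset.mem_powerset] at hS
    obtain ⟨hSsub, hScard⟩ := hS
    have hSA : ∀ j ∈ S, tA nu rho j ∧ j < M := by
      intro j hj
      have := hSsub hj
      unfold Afin at this
      rw [Finset.mem_filter, Finset.mem_range] at this
      exact ⟨this.2, this.1⟩
    set p : ℕ → ℕ := fun j =>
      max (nu.parts j) (rho.parts j) + (if j ∈ S then 1 else 0) with hp
    have hanti : ∀ j, p (j+1) ≤ p j := by
      intro j
      simp only [hp]
      by_cases hj : j + 1 ∈ S
      · have hA := (hSA _ hj).1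
        obtain ⟨ht, hor⟩ := hA
        have hor' : nu.parts (j+1) < rho.parts (j+1-1) := by
          rcases hor with h | h
          · omega
          · exact h
        rw [if_pos hj]
        simp only [Nat.add_sub_cancel] at hor'
        split_ifs <;> omega
      · rw [if_neg hj]
        have h1 := anti nu (by omega : j ≤ j + 1)
        have h2 := anti rho (by omega : j ≤ j + 1)
        split_ifs <;> omega
    have hzero : ∀ j, M ≤ j → p j = 0 := by
      intro j hj
      simp only [hp]
      have h1 := hM j (by omega)
      have h2 : j ∉ S := fun hc => by have := (hSA j hc).2; omega
      rw [if_neg h2]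
      omega
    set mu0 : Ptn := ⟨p, hanti, ⟨M, hzero⟩⟩ with hmu0
    have hcard : ∑ j ∈ Finset.range M, (if j ∈ S then 1 else 0) = S.card := by
      have e : (Finset.range M).filter (fun j => j ∈ S) = S := by
        ext j
        rw [Finset.mem_filter, Finset.mem_range]
        exact ⟨fun h => h.2, fun h => ⟨(hSA j h).2, h⟩⟩
      rw [← Finset.card_filter, e]
    have hpsum : psum p M = psum nu.parts M + (rdef nu rho M + S.card) := by
      unfold psum rdef
      rw [← hcard, ← Finset.sum_add_distrib, ← Finset.sum_add_distrib]
      apply Finset.sum_congr rfl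
      intro j _
      simp only [hp]
      split_ifs <;> omega
    have hsize : mu0.size = psum p M := size_eq mu0 M hzero
    have hVS : VS c mu0 nu := by
      refine ⟨fun j => by simp only [hmu0, hp]; split_ifs <;> omega, by omega, ?_⟩
      intro j
      show p j ≤ nu.parts j + 1
      simp only [hp]
      have h1 := H1 j
      by_cases hj : j ∈ S
      · have := (hSA j hj).1.1
        rw [if_pos hj]
        omega
      · rw [if_neg hj]
        omega
    have hHS : HS k mu0 rho := by
      refine ⟨fun j => by simp only [hmu0, hp]; split_ifs <;> omega, by omega, ?_⟩
      intro j
      show p (j+1) ≤ rho.parts j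
      simp only [hp]
      have h1 := H2 j
      have h2 := anti rho (by omega : j ≤ j + 1)
      by_cases hj : j + 1 ∈ S
      · obtain ⟨ht, hor⟩ := (hSA _ hj).1
        have hor' : nu.parts (j+1) < rho.parts j := by
          rcases hor with h | h
          · omega
          · simpa using h
        rw [if_pos hj]
        omega
      · rw [if_neg hj]
        omega
    refine ⟨mu0, mem_UpF.mpr ⟨hVS, hHS⟩, ?_⟩
    ext j
    rw [Finset.mem_filter]
    constructor
    · rintro ⟨hjA, hlt⟩
      show j ∈ S
      simp only [hmu0, hp] at hlt
      by_contra hc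
      rw [if_neg hc] at hlt
      omega
    · intro hj
      refine ⟨hSsub hj, ?_⟩
      show max (nu.parts j) (rho.parts j) < mu0.parts j
      simp only [hmu0, hp]
      rw [if_pos hj]
      omega

end BP
namespace BP

lemma cnt_dn (nu rho : Ptn) (c k M : ℕ)
    (hM : ∀ i, M - 1 ≤ i → nu.parts i = 0 ∧ rho.parts i = 0) (hM1 : 1 ≤ M)
    (H1 : ∀ i, rho.parts i ≤ nu.parts i + 1) (H2 : ∀ i, nu.parts (i+1) ≤ rho.parts i)
    (hcompat : nu.size + c = rho.size + k) :
    (DnF nu rho c k).card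
      = ((Bfin nu rho M).powerset.filter (fun S => S.card + rdef nu rho M = c)).card := by
  have hsa : nu.size = psum nu.parts M := size_eq nu M (fun j hj => (hM j (by omega)).1)
  have hsb : rho.size = psum rho.parts M := size_eq rho M (fun j hj => (hM j (by omega)).2)
  have hdn : ∀ μ : Ptn, HS k nu μ → VS c rho μ →
      (∀ j, μ.parts j ≤ min (nu.parts j) (rho.parts j)
          ∧ min (nu.parts j) (rho.parts j) ≤ μ.parts j + 1)
      ∧ (∀ j, M ≤ j → μ.parts j = 0)
      ∧ (∀ j, μ.parts j < min (nu.parts j) (rho.parts j) → tB nu rho j ∧ j < M) := by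
    intro μ hHS hVS
    obtain ⟨hsub1, hsz1, hrow⟩ := hHS
    obtain ⟨hsub2, hsz2, hcol⟩ := hVS
    have hbox : ∀ j, μ.parts j ≤ min (nu.parts j) (rho.parts j)
        ∧ min (nu.parts j) (rho.parts j) ≤ μ.parts j + 1 := by
      intro j
      have := hsub1 j
      have := hsub2 j
      have := hcol j
      omega
    have hz : ∀ j, M ≤ j → μ.parts j = 0 := by
      intro j hj
      have h1 := hsub1 j
      have h2 := (hM j (by omega)).1
      omega
    refine ⟨hbox, hz, ?_⟩
    intro j hfree
    have hb := hbox j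
    have h1 := hcol j
    have h2 := hrow j
    have hjM : j < M := by
      by_contra hc
      have h3 := (hM j (by omega)).1
      omega
    exact ⟨⟨by omega, by omega⟩, hjM⟩
  apply Finset.card_bij
    (fun μ _ => (Bfin nu rho M).filter (fun j => μ.parts j < min (nu.parts j) (rho.parts j)))
  · intro μ hμ
    rw [mem_DnF] at hμ
    obtain ⟨hbox, hz, hfree⟩ := hdn μ hμ.1 hμ.2
    rw [Finset.mem_filter, Finset.mem_powerset]
    refine ⟨Finset.filter_subset _ _, ?_⟩
    have e1 : ((Bfin nu rho M).filter
        (fun j => μ.parts j < min (nu.parts j) (rho.parts j))).card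
        = ∑ j ∈ Finset.range M,
            (if μ.parts j < min (nu.parts j) (rho.parts j) then 1 else 0) := by
      unfold Bfin
      rw [Finset.filter_filter, Finset.card_filter]
      apply Finset.sum_congr rfl
      intro j hj
      by_cases hp : μ.parts j < min (nu.parts j) (rho.parts j)
      · rw [if_pos ⟨(hfree j hp).1, hp⟩, if_pos hp]
      · rw [if_neg (fun hh => hp hh.2), if_neg hp]
    have e2 : psum rho.parts M = psum μ.parts M + (rdef nu rho M
        + ∑ j ∈ Finset.range M,
            (if μ.parts j < min (nu.parts j) (rho.parts j) then 1 else 0)) := by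
      unfold psum rdef
      rw [← Finset.sum_add_distrib, ← Finset.sum_add_distrib]
      apply Finset.sum_congr rfl
      intro j _
      have := hbox j
      have := hμ.2.2.2 j
      split_ifs <;> omega
    have e3 : μ.size = psum μ.parts M := size_eq μ M hz
    have e4 : rho.size = μ.size + c := hμ.2.2.1
    omega
  · intro μ hμ ν hν heq
    rw [mem_DnF] at hμ hν
    obtain ⟨hboxμ, hzμ, hfreeμ⟩ := hdn μ hμ.1 hμ.2
    obtain ⟨hboxν, hzν, hfreeν⟩ := hdn ν hν.1 hν.2
    apply ptn_ext
    funext j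
    by_cases hj : M ≤ j
    · rw [hzμ j hj, hzν j hj]
    · have hiff := Finset.ext_iff.mp heq j
      simp only [Finset.mem_filter] at hiff
      have hμB : μ.parts j < min (nu.parts j) (rho.parts j) → j ∈ Bfin nu rho M := by
        intro hp
        unfold Bfin
        rw [Finset.mem_filter, Finset.mem_range]
        exact ⟨(hfreeμ j hp).2, (hfreeμ j hp).1⟩
      have hνB : ν.parts j < min (nu.parts j) (rho.parts j) → j ∈ Bfin nu rho M := by
        intro hp
        unfold Bfin
        rw [Finset.mem_filter, Finset.mem_range]
        exact ⟨(hfreeν j hp).2, (hfreeν j hp).1⟩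
      have h1 := hboxμ j
      have h2 := hboxν j
      by_cases hpμ : μ.parts j < min (nu.parts j) (rho.parts j) <;>
        by_cases hpν : ν.parts j < min (nu.parts j) (rho.parts j)
      · omega
      · exact absurd (hiff.mp ⟨hμB hpμ, hpμ⟩).2 hpν
      · exact absurd (hiff.mpr ⟨hνB hpν, hpν⟩).2 hpμ
      · omega
  · intro S hS
    rw [Finset.mem_filter, Finset.mem_powerset] at hS
    obtain ⟨hSsub, hScard⟩ := hS
    have hSB : ∀ j ∈ S, tB nu rho j ∧ j < M := by
      intro j hj
      have := hSsub hj
      unfold Bfin at this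
      rw [Finset.mem_filter, Finset.mem_range] at this
      exact ⟨this.2, this.1⟩
    set p : ℕ → ℕ := fun j =>
      min (nu.parts j) (rho.parts j) - (if j ∈ S then 1 else 0) with hp
    have hanti : ∀ j, p (j+1) ≤ p j := by
      intro j
      simp only [hp]
      have h1 := anti nu (by omega : j ≤ j + 1)
      have h2 := anti rho (by omega : j ≤ j + 1)
      by_cases hj : j ∈ S
      · obtain ⟨ht, hlt⟩ := (hSB _ hj).1
        rw [if_pos hj]
        split_ifs <;> omega
      · rw [if_neg hj]
        split_ifs <;> omega
    have hzero : ∀ j, M ≤ j → p j = 0 := by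
      intro j hj
      simp only [hp]
      have h1 := hM j (by omega)
      omega
    set mu0 : Ptn := ⟨p, hanti, ⟨M, hzero⟩⟩ with hmu0
    have hcard : ∑ j ∈ Finset.range M, (if j ∈ S then 1 else 0) = S.card := by
      have e : (Finset.range M).filter (fun j => j ∈ S) = S := by
        ext j
        rw [Finset.mem_filter, Finset.mem_range]
        exact ⟨fun h => h.2, fun h => ⟨(hSB j h).2, h⟩⟩
      rw [← Finset.card_filter, e]
    have hpsum : psum rho.parts M = psum p M + (rdef nu rho M + S.card) := by
      unfold psum rdef
      rw [← hcard, ← Finset.sum_add_distrib, ← Finset.sum_add_distrib]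
      apply Finset.sum_congr rfl
      intro j _
      simp only [hp]
      by_cases hj : j ∈ S
      · obtain ⟨ht, hlt⟩ := (hSB _ hj).1
        rw [if_pos hj]
        omega
      · rw [if_neg hj]
        omega
    have hsize : mu0.size = psum p M := size_eq mu0 M hzero
    have hHS : HS k nu mu0 := by
      refine ⟨fun j => by simp only [hmu0, hp]; split_ifs <;> omega, by omega, ?_⟩
      intro j
      show nu.parts (j+1) ≤ p j
      simp only [hp]
      have h1 := H2 j
      have h2 := anti nu (by omega : j ≤ j + 1)
      by_cases hj : j ∈ S
      · obtain ⟨ht, hlt⟩ := (hSB _ hj).1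
        rw [if_pos hj]
        omega
      · rw [if_neg hj]
        omega
    have hVS : VS c rho mu0 := by
      refine ⟨fun j => by simp only [hmu0, hp]; split_ifs <;> omega, by omega, ?_⟩
      intro j
      show rho.parts j ≤ p j + 1
      simp only [hp]
      have h1 := H1 j
      by_cases hj : j ∈ S
      · obtain ⟨ht, hlt⟩ := (hSB _ hj).1
        rw [if_pos hj]
        omega
      · rw [if_neg hj]
        omega
    refine ⟨mu0, mem_DnF.mpr ⟨hHS, hVS⟩, ?_⟩
    ext j
    rw [Finset.mem_filter]
    constructor
    · rintro ⟨hjB, hlt⟩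
      show j ∈ S
      simp only [hmu0, hp] at hlt
      by_contra hc
      rw [if_neg hc] at hlt
      omega
    · intro hj
      refine ⟨hSsub hj, ?_⟩
      show mu0.parts j < min (nu.parts j) (rho.parts j)
      simp only [hmu0, hp]
      rw [if_pos hj]
      obtain ⟨ht, hlt⟩ := (hSB _ hj).1
      omega

end BP
namespace BP

lemma cntP (X : Finset ℕ) (r c : ℕ) :
    (X.powerset.filter (fun S => S.card + r = c)).card
      = if r ≤ c then X.card.choose (c - r) else 0 := by
  split_ifs with h
  · have e : X.powerset.filter (fun S => S.card + r = c)
        = X.powerset.filter (fun S => S.card = c - r) := by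
      apply Finset.filter_congr
      intro S _
      constructor
      · intro hh; omega
      · intro hh; omega
    rw [e, ← Finset.powersetCard_eq_filter, Finset.card_powersetCard]
  · have e : X.powerset.filter (fun S => S.card + r = c) = ∅ := by
      apply Finset.eq_empty_of_forall_notMem
      intro S hS
      rw [Finset.mem_filter] at hS
      omega
    rw [e, Finset.card_empty]

lemma pascal_cnt (A B : Finset ℕ) (r c : ℕ) (hAB : A.card = B.card + 1) :
    (A.powerset.filter (fun S => S.card + r = c + 1)).card
      = (B.powerset.filter (fun S => S.card + r = c + 1)).card
        + (B.powerset.filter (fun S => S.card + r = c)).card := by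
  rw [cntP, cntP, cntP, hAB]
  rcases Nat.lt_trichotomy r (c + 1) with h | h | h
  · rw [if_pos (by omega), if_pos (by omega)]
    by_cases h2 : r ≤ c
    · rw [if_pos h2]
      have e1 : c + 1 - r = (c - r) + 1 := by omega
      rw [e1, Nat.choose_succ_succ]
      simp only [Nat.succ_eq_add_one]
      omega
    · rw [if_neg h2]
      have e1 : c + 1 - r = 0 := by omega
      rw [e1]
      simp
  · subst h
    rw [if_pos (by omega), if_pos (by omega), if_neg (by omega)]
    simp
  · rw [if_neg (by omega), if_neg (by omega), if_neg (by omega)]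

lemma up_empty_incompat {nu rho : Ptn} {c k : ℕ} (h : nu.size + c ≠ rho.size + k) :
    UpF nu rho c k = ∅ := by
  apply Finset.eq_empty_of_forall_notMem
  intro μ hμ
  rw [mem_UpF] at hμ
  have := hμ.1.2.1
  have := hμ.2.2.1
  omega

lemma dn_empty_incompat {nu rho : Ptn} {c k : ℕ} (h : nu.size + c ≠ rho.size + k) :
    DnF nu rho c k = ∅ := by
  apply Finset.eq_empty_of_forall_notMem
  intro μ hμ
  rw [mem_DnF] at hμ
  have := hμ.1.2.1
  have := hμ.2.2.1
  omega

lemma up_empty_H1 {nu rho : Ptn} {c k : ℕ} {i : ℕ} (h : nu.parts i + 1 < rho.parts i) :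
    UpF nu rho c k = ∅ := by
  apply Finset.eq_empty_of_forall_notMem
  intro μ hμ
  rw [mem_UpF] at hμ
  have h1 := hμ.1.2.2 i
  have h2 := hμ.2.1 i
  omega

lemma dn_empty_H1 {nu rho : Ptn} {c k : ℕ} {i : ℕ} (h : nu.parts i + 1 < rho.parts i) :
    DnF nu rho c k = ∅ := by
  apply Finset.eq_empty_of_forall_notMem
  intro μ hμ
  rw [mem_DnF] at hμ
  have h1 := hμ.1.1 i
  have h2 := hμ.2.2.2 i
  omega

lemma up_empty_H2 {nu rho : Ptn} {c k : ℕ} {i : ℕ} (h : rho.parts i < nu.parts (i+1)) :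
    UpF nu rho c k = ∅ := by
  apply Finset.eq_empty_of_forall_notMem
  intro μ hμ
  rw [mem_UpF] at hμ
  have h1 := hμ.1.1 (i+1)
  have h2 := hμ.2.2.2 i
  omega

lemma dn_empty_H2 {nu rho : Ptn} {c k : ℕ} {i : ℕ} (h : rho.parts i < nu.parts (i+1)) :
    DnF nu rho c k = ∅ := by
  apply Finset.eq_empty_of_forall_notMem
  intro μ hμ
  rw [mem_DnF] at hμ
  have h1 := hμ.1.2.2 i
  have h2 := hμ.2.1 i
  omega

lemma size_le_rdef (nu rho : Ptn) (M : ℕ)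
    (hM : ∀ i, M - 1 ≤ i → nu.parts i = 0 ∧ rho.parts i = 0) :
    rho.size ≤ nu.size + rdef nu rho M := by
  have hsa : nu.size = psum nu.parts M := size_eq nu M (fun j hj => (hM j (by omega)).1)
  have hsb : rho.size = psum rho.parts M := size_eq rho M (fun j hj => (hM j (by omega)).2)
  rw [hsa, hsb]
  unfold psum rdef
  rw [← Finset.sum_add_distrib]
  apply Finset.sum_le_sum
  intro j _
  omega

lemma keycnt (nu rho : Ptn) (c k : ℕ) :
    (UpF nu rho (c+1) k).card
      = (DnF nu rho (c+1) k).card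
        + (if k = 0 then 0 else (DnF nu rho c (k-1)).card) := by
  by_cases hcompat : nu.size + (c+1) = rho.size + k
  · by_cases hH1 : ∀ i, rho.parts i ≤ nu.parts i + 1
    · by_cases hH2 : ∀ i, nu.parts (i+1) ≤ rho.parts i
      · set M := bnd nu + bnd rho + 2 with hMdef
        have hM : ∀ i, M - 1 ≤ i → nu.parts i = 0 ∧ rho.parts i = 0 := by
          intro i hi
          exact ⟨bnd_spec nu i (by omega), bnd_spec rho i (by omega)⟩
        have hM1 : 1 ≤ M := by omega
        rw [cnt_up nu rho (c+1) k M hM hM1 hH1 hH2 hcompat,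
            cnt_dn nu rho (c+1) k M hM hM1 hH1 hH2 hcompat]
        have hAB := card_AB nu rho M hM hM1 hH1
        by_cases hk : k = 0
        · subst hk
          rw [if_pos rfl, add_zero]
          have hpas := pascal_cnt (Afin nu rho M) (Bfin nu rho M) (rdef nu rho M) c hAB
          have hzero : ((Bfin nu rho M).powerset.filter
              (fun S => S.card + rdef nu rho M = c)).card = 0 := by
            rw [cntP]
            have := size_le_rdef nu rho M hM
            rw [if_neg (by omega)]
          omega
        · rw [if_neg hk]
          have hcompat' : nu.size + c = rho.size + (k - 1) := by omega
          rw [cnt_dn nu rho c (k-1) M hM hM1 hH1 hH2 hcompat']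
          exact pascal_cnt (Afin nu rho M) (Bfin nu rho M) (rdef nu rho M) c hAB
      · push_neg at hH2
        obtain ⟨i, hi⟩ := hH2
        rw [up_empty_H2 hi, dn_empty_H2 hi]
        by_cases hk : k = 0
        · rw [if_pos hk]; simp
        · rw [if_neg hk, dn_empty_H2 hi]; simp
    · push_neg at hH1
      obtain ⟨i, hi⟩ := hH1
      rw [up_empty_H1 hi, dn_empty_H1 hi]
      by_cases hk : k = 0
      · rw [if_pos hk]; simp
      · rw [if_neg hk, dn_empty_H1 hi]; simp
  · rw [up_empty_incompat hcompat, dn_empty_incompat hcompat]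
    by_cases hk : k = 0
    · rw [if_pos hk]; simp
    · rw [if_neg hk, dn_empty_incompat (by omega)]; simp

end BP
namespace BP

lemma regroup_up (c k : ℕ) (P : Ptn → ℚ) (nu : Ptn) (W : Finset Ptn)
    (hW : ∀ lam rho, VS c lam nu → HS k lam rho → rho ∈ W) :
    ∑ lam ∈ VSF c nu, ∑ rho ∈ HSF k lam, P rho
      = ∑ rho ∈ W, ((UpF nu rho c k).card : ℚ) * P rho := by
  have hrhs : ∀ rho : Ptn, ((UpF nu rho c k).card : ℚ) * P rho
      = ∑ _lam ∈ UpF nu rho c k, P rho := by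
    intro rho
    rw [Finset.sum_const, nsmul_eq_mul]
  calc ∑ lam ∈ VSF c nu, ∑ rho ∈ HSF k lam, P rho
      = ∑ p ∈ (VSF c nu).sigma (fun lam => HSF k lam), P p.2 :=
        Finset.sum_sigma' (VSF c nu) (fun lam => HSF k lam) (fun _ rho => P rho)
    _ = ∑ q ∈ W.sigma (fun rho => UpF nu rho c k), P q.1 := by
        refine Finset.sum_bij' (fun p _ => (⟨p.2, p.1⟩ : Σ _ : Ptn, Ptn))
          (fun q _ => (⟨q.2, q.1⟩ : Σ _ : Ptn, Ptn)) ?_ ?_ ?_ ?_ ?_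
        · intro p hp
          rw [Finset.mem_sigma] at hp ⊢
          have h1 := mem_VSF.mp hp.1
          have h2 := mem_HSF.mp hp.2
          exact ⟨hW p.1 p.2 h1 h2, mem_UpF.mpr ⟨h1, h2⟩⟩
        · intro q hq
          rw [Finset.mem_sigma] at hq ⊢
          have h2 := mem_UpF.mp hq.2
          exact ⟨mem_VSF.mpr h2.1, mem_HSF.mpr h2.2⟩
        · rintro ⟨p1, p2⟩ _; rfl
        · rintro ⟨q1, q2⟩ _; rfl
        · rintro ⟨p1, p2⟩ _; rfl
    _ = ∑ rho ∈ W, ∑ _lam ∈ UpF nu rho c k, P rho := Finset.sum_sigma _ _ _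
    _ = ∑ rho ∈ W, ((UpF nu rho c k).card : ℚ) * P rho :=
        Finset.sum_congr rfl (fun rho _ => (hrhs rho).symm)

lemma regroup_dn (c k : ℕ) (P : Ptn → ℚ) (nu : Ptn) (W : Finset Ptn)
    (hW : ∀ mu rho, HS k nu mu → VS c rho mu → rho ∈ W) :
    ∑ mu ∈ HSF k nu, ∑ rho ∈ VSF c mu, P rho
      = ∑ rho ∈ W, ((DnF nu rho c k).card : ℚ) * P rho := by
  have hrhs : ∀ rho : Ptn, ((DnF nu rho c k).card : ℚ) * P rho
      = ∑ _mu ∈ DnF nu rho c k, P rho := by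
    intro rho
    rw [Finset.sum_const, nsmul_eq_mul]
  calc ∑ mu ∈ HSF k nu, ∑ rho ∈ VSF c mu, P rho
      = ∑ p ∈ (HSF k nu).sigma (fun mu => VSF c mu), P p.2 :=
        Finset.sum_sigma' (HSF k nu) (fun mu => VSF c mu) (fun _ rho => P rho)
    _ = ∑ q ∈ W.sigma (fun rho => DnF nu rho c k), P q.1 := by
        refine Finset.sum_bij' (fun p _ => (⟨p.2, p.1⟩ : Σ _ : Ptn, Ptn))
          (fun q _ => (⟨q.2, q.1⟩ : Σ _ : Ptn, Ptn)) ?_ ?_ ?_ ?_ ?_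
        · intro p hp
          rw [Finset.mem_sigma] at hp ⊢
          have h1 := mem_HSF.mp hp.1
          have h2 := mem_VSF.mp hp.2
          exact ⟨hW p.1 p.2 h1 h2, mem_DnF.mpr ⟨h1, h2⟩⟩
        · intro q hq
          rw [Finset.mem_sigma] at hq ⊢
          have h2 := mem_DnF.mp hq.2
          exact ⟨mem_HSF.mpr h2.1, mem_VSF.mpr h2.2⟩
        · rintro ⟨p1, p2⟩ _; rfl
        · rintro ⟨q1, q2⟩ _; rfl
        · rintro ⟨p1, p2⟩ _; rfl
    _ = ∑ rho ∈ W, ∑ _mu ∈ DnF nu rho c k, P rho := Finset.sum_sigma _ _ _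
    _ = ∑ rho ∈ W, ((DnF nu rho c k).card : ℚ) * P rho :=
        Finset.sum_congr rfl (fun rho _ => (hrhs rho).symm)

lemma E3 (c : ℕ) (kz : ℤ) (P : Ptn → ℚ) (nu : Ptn) :
    eperp ℚ (c+1) (Mh ℚ kz P) nu
      = Mh ℚ kz (eperp ℚ (c+1) P) nu + Mh ℚ (kz-1) (eperp ℚ c P) nu := by
  by_cases hneg : kz < 0
  · rw [eperp_congr nu (fun x => by rw [Mh_eq, if_pos hneg]), eperp_zero,
      Mh_eq, if_pos hneg, Mh_eq, if_pos (by omega : kz - 1 < 0)]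
    norm_num
  · set K := kz.toNat with hKdef
    have hK : kz = (K : ℤ) := (Int.toNat_of_nonneg (by omega)).symm
    have hLHS : ∀ W : Finset Ptn,
        (∀ lam rho, VS (c+1) lam nu → HS K lam rho → rho ∈ W) →
        eperp ℚ (c+1) (Mh ℚ kz P) nu
          = ∑ rho ∈ W, ((UpF nu rho (c+1) K).card : ℚ) * P rho := by
      intro W hW
      rw [eperp_eq]
      calc ∑ lam ∈ VSF (c+1) nu, Mh ℚ kz P lam
          = ∑ lam ∈ VSF (c+1) nu, ∑ rho ∈ HSF K lam, P rho :=
            Finset.sum_congr rfl (fun lam _ => by rw [Mh_eq, if_neg hneg])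
        _ = _ := regroup_up (c+1) K P nu W hW
    have hRHS1 : ∀ W : Finset Ptn,
        (∀ mu rho, HS K nu mu → VS (c+1) rho mu → rho ∈ W) →
        Mh ℚ kz (eperp ℚ (c+1) P) nu
          = ∑ rho ∈ W, ((DnF nu rho (c+1) K).card : ℚ) * P rho := by
      intro W hW
      rw [Mh_eq, if_neg hneg]
      calc ∑ mu ∈ HSF K nu, eperp ℚ (c+1) P mu
          = ∑ mu ∈ HSF K nu, ∑ rho ∈ VSF (c+1) mu, P rho :=
            Finset.sum_congr rfl (fun mu _ => by rw [eperp_eq])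
        _ = _ := regroup_dn (c+1) K P nu W hW
    by_cases hk0 : kz = 0
    · have hK0 : K = 0 := by omega
      set W : Finset Ptn :=
        ((VSF (c+1) nu).biUnion (fun lam => HSF K lam))
          ∪ ((HSF K nu).biUnion (fun mu => VSF (c+1) mu)) with hWdef
      rw [hLHS W (fun lam rho h1 h2 => Finset.mem_union_left _
            (Finset.mem_biUnion.mpr ⟨lam, mem_VSF.mpr h1, mem_HSF.mpr h2⟩)),
          hRHS1 W (fun mu rho h1 h2 => Finset.mem_union_right _
            (Finset.mem_biUnion.mpr ⟨mu, mem_HSF.mpr h1, mem_VSF.mpr h2⟩)),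
          Mh_eq, if_pos (by omega : kz - 1 < 0), add_zero]
      apply Finset.sum_congr rfl
      intro rho _
      have hcnt := keycnt nu rho c K
      rw [if_pos hK0, add_zero] at hcnt
      rw [hcnt]
    · have hK1 : 1 ≤ K := by omega
      have hK1' : ¬ (kz - 1 < 0) := by omega
      have hKm : (kz - 1).toNat = K - 1 := by omega
      set W : Finset Ptn :=
        (((VSF (c+1) nu).biUnion (fun lam => HSF K lam))
          ∪ ((HSF K nu).biUnion (fun mu => VSF (c+1) mu)))
          ∪ ((HSF (K-1) nu).biUnion (fun mu => VSF c mu)) with hWdef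
      have hRHS2 : Mh ℚ (kz-1) (eperp ℚ c P) nu
          = ∑ rho ∈ W, ((DnF nu rho c (K-1)).card : ℚ) * P rho := by
        rw [Mh_eq, if_neg hK1', hKm]
        calc ∑ mu ∈ HSF (K-1) nu, eperp ℚ c P mu
            = ∑ mu ∈ HSF (K-1) nu, ∑ rho ∈ VSF c mu, P rho :=
              Finset.sum_congr rfl (fun mu _ => by rw [eperp_eq])
          _ = _ := regroup_dn c (K-1) P nu W
              (fun mu rho h1 h2 => Finset.mem_union_right _
                (Finset.mem_biUnion.mpr ⟨mu, mem_HSF.mpr h1, mem_VSF.mpr h2⟩))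
      rw [hLHS W (fun lam rho h1 h2 => Finset.mem_union_left _ (Finset.mem_union_left _
            (Finset.mem_biUnion.mpr ⟨lam, mem_VSF.mpr h1, mem_HSF.mpr h2⟩))),
          hRHS1 W (fun mu rho h1 h2 => Finset.mem_union_left _ (Finset.mem_union_right _
            (Finset.mem_biUnion.mpr ⟨mu, mem_HSF.mpr h1, mem_VSF.mpr h2⟩))),
          hRHS2, ← Finset.sum_add_distrib]
      apply Finset.sum_congr rfl
      intro rho _
      have hcnt := keycnt nu rho c K
      rw [if_neg (by omega : ¬ K = 0)] at hcnt
      rw [hcnt]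
      push_cast
      ring

end BP
namespace BP

lemma vs_zero {mu nu : Ptn} : VS 0 mu nu ↔ mu = nu := by
  constructor
  · intro h
    exact sub_size_eq h.1 (by have := h.2.1; omega)
  · rintro rfl
    exact ⟨fun i => le_refl _, by omega, fun i => by omega⟩

lemma E0 (f : Ptn → ℚ) (x : Ptn) : eperp ℚ 0 f x = f x := by
  rw [eperp_eq]
  have e : VSF 0 x = {x} := by
    ext μ
    rw [mem_VSF, Finset.mem_singleton, vs_zero]
  rw [e, Finset.sum_singleton]

lemma eperp_eperp_zero {P : Ptn → ℚ} {t : ℕ} (hP : ∀ μ, P μ ≠ 0 → μ.size ≤ t)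
    {c d : ℕ} (h : t < c + d) (nu : Ptn) : eperp ℚ c (eperp ℚ d P) nu = 0 := by
  rw [eperp_eq]
  apply Finset.sum_eq_zero
  intro μ hμ
  rw [mem_VSF] at hμ
  by_contra hne
  obtain ⟨ρ, hρ, hρne⟩ := eperp_ne_zero_ex hne
  have := hP ρ hρne
  have := hρ.2.1
  have := hμ.2.1
  omega

noncomputable def Tm (P : Ptn → ℚ) (a b : ℤ) (c d : ℕ) (lam : Ptn) : ℚ :=
  Mh ℚ (a + c) (Mh ℚ (b + d) (eperp ℚ c (eperp ℚ d P))) lam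

noncomputable def Xs (P : Ptn → ℚ) (a b : ℤ) (R S : ℕ) (lam : Ptn) : ℚ :=
  ∑ c ∈ Finset.range R, ∑ d ∈ Finset.range S, (-1:ℚ)^c * (-1:ℚ)^d * Tm P a b c d lam

lemma Tm_zero {P : Ptn → ℚ} {t : ℕ} (hP : ∀ μ, P μ ≠ 0 → μ.size ≤ t)
    (a b : ℤ) {c d : ℕ} (h : t < c + d) (lam : Ptn) : Tm P a b c d lam = 0 := by
  unfold Tm
  rw [Mh_congr lam (fun x => Mh_congr x (fun y => eperp_eperp_zero hP h y)),
    Mh_congr lam (fun x => Mh_zero _ x), Mh_zero]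

lemma Xs_ext {P : Ptn → ℚ} {t : ℕ} (hP : ∀ μ, P μ ≠ 0 → μ.size ≤ t)
    (a b : ℤ) {R S R' S' : ℕ} (hR : t < R) (hRR : R ≤ R') (hS : t < S) (hSS : S ≤ S')
    (lam : Ptn) : Xs P a b R' S' lam = Xs P a b R S lam := by
  unfold Xs
  rw [← Finset.sum_subset (Finset.range_subset_range.mpr hRR)]
  · apply Finset.sum_congr rfl
    intro c hc
    rw [← Finset.sum_subset (Finset.range_subset_range.mpr hSS)]
    intro d _ hd
    rw [Finset.mem_range, not_lt] at hd
    rw [Tm_zero hP a b (by omega) lam, mul_zero]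
  · intro c _ hc
    rw [Finset.mem_range, not_lt] at hc
    apply Finset.sum_eq_zero
    intro d _
    rw [Tm_zero hP a b (by omega) lam, mul_zero]

lemma Xs_sym (P : Ptn → ℚ) (a b : ℤ) (R : ℕ) (lam : Ptn) :
    Xs P a b R R lam = Xs P b a R R lam := by
  unfold Xs
  rw [Finset.sum_comm]
  apply Finset.sum_congr rfl
  intro c _
  apply Finset.sum_congr rfl
  intro d _
  have e : Tm P a b d c lam = Tm P b a c d lam := by
    unfold Tm
    rw [Mh_comm]
    exact Mh_congr lam (fun x => Mh_congr x (fun y => eperp_comm d c P y))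
  rw [e]
  ring

lemma TI0 (P : Ptn → ℚ) (m n : ℤ) (d : ℕ) (lam : Ptn) :
    Mh ℚ (m + ((0:ℕ) : ℤ)) (eperp ℚ 0 (Mh ℚ (n + d) (eperp ℚ d P))) lam
      = Tm P m n 0 d lam := by
  unfold Tm
  rw [Mh_congr lam (fun x => E0 _ x)]
  exact (Mh_congr lam (fun x => Mh_congr x (fun y => E0 _ y))).symm

lemma TI1 (P : Ptn → ℚ) (m n : ℤ) (c d : ℕ) (lam : Ptn) :
    Mh ℚ (m + ((c+1 : ℕ) : ℤ)) (eperp ℚ (c+1) (Mh ℚ (n + d) (eperp ℚ d P))) lam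
      = Tm P m n (c+1) d lam + Tm P (m+1) (n-1) c d lam := by
  rw [Mh_congr lam (fun x => E3 c (n + d) (eperp ℚ d P) x), Mh_add]
  congr 1
  have h1 : (m + ((c+1 : ℕ) : ℤ)) = (m + 1) + c := by push_cast; ring
  have h2 : (n + (d:ℤ)) - 1 = (n - 1) + d := by ring
  rw [h1, h2]
  rfl

lemma Sop_Sop (P : Ptn → ℚ) (t₀ : ℕ) (hP : ∀ μ, P μ ≠ 0 → μ.size ≤ t₀)
    (m n : ℤ) (K' : ℕ) (hK1 : t₀ + n.toNat < K' + 1) (lam : Ptn) :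
    Sop ℚ m (Sop ℚ n P) lam
      = Xs P m n (K'+1) (K'+1) lam - Xs P (m+1) (n-1) K' (K'+1) lam := by
  have hQ := supp_size_Sop hP n
  have hK2 : t₀ < K' + 1 := by omega
  rw [Sop_eq m (Sop ℚ n P) (t₀ + n.toNat) hQ (K'+1) hK1 lam]
  have e2 : ∀ c : ℕ, Mh ℚ (m + c) (eperp ℚ c (Sop ℚ n P)) lam
      = ∑ d ∈ Finset.range (K'+1),
          (-1:ℚ)^d * Mh ℚ (m + c) (eperp ℚ c (Mh ℚ (n + d) (eperp ℚ d P))) lam := by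
    intro c
    have estep : ∀ x, eperp ℚ c (Sop ℚ n P) x
        = ∑ d ∈ Finset.range (K'+1),
            (-1:ℚ)^d * eperp ℚ c (Mh ℚ (n + d) (eperp ℚ d P)) x := by
      intro x
      rw [eperp_congr x (fun y => Sop_eq n P t₀ hP (K'+1) hK2 y), eperp_sum]
      exact Finset.sum_congr rfl (fun d _ => eperp_smul c _ _ x)
    rw [Mh_congr lam estep, Mh_sum]
    exact Finset.sum_congr rfl (fun d _ => Mh_smul _ _ _ lam)
  have e3 : ∀ c : ℕ, (-1:ℚ)^c * Mh ℚ (m + c) (eperp ℚ c (Sop ℚ n P)) lam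
      = ∑ d ∈ Finset.range (K'+1), (-1:ℚ)^c * ((-1:ℚ)^d
          * Mh ℚ (m + c) (eperp ℚ c (Mh ℚ (n + d) (eperp ℚ d P))) lam) := by
    intro c
    rw [e2 c, Finset.mul_sum]
  rw [Finset.sum_congr rfl (fun c _ => e3 c)]
  rw [Finset.sum_range_succ']
  -- first piece: shifted c+1 terms
  have e4 : ∀ c : ℕ, (∑ d ∈ Finset.range (K'+1), (-1:ℚ)^(c+1) * ((-1:ℚ)^d
      * Mh ℚ (m + ((c+1 : ℕ) : ℤ)) (eperp ℚ (c+1) (Mh ℚ (n + d) (eperp ℚ d P))) lam))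
      = (∑ d ∈ Finset.range (K'+1), (-1:ℚ)^(c+1) * (-1:ℚ)^d * Tm P m n (c+1) d lam)
        - (∑ d ∈ Finset.range (K'+1), (-1:ℚ)^c * (-1:ℚ)^d * Tm P (m+1) (n-1) c d lam) := by
    intro c
    rw [← Finset.sum_sub_distrib]
    apply Finset.sum_congr rfl
    intro d _
    rw [TI1 P m n c d lam]
    rw [pow_succ]
    ring
  rw [Finset.sum_congr rfl (fun c _ => e4 c)]
  have e5 : (∑ d ∈ Finset.range (K'+1), (-1:ℚ)^(0:ℕ) * ((-1:ℚ)^d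
      * Mh ℚ (m + ((0:ℕ) : ℤ)) (eperp ℚ 0 (Mh ℚ (n + d) (eperp ℚ d P))) lam))
      = ∑ d ∈ Finset.range (K'+1), (-1:ℚ)^(0:ℕ) * (-1:ℚ)^d * Tm P m n 0 d lam := by
    apply Finset.sum_congr rfl
    intro d _
    rw [TI0 P m n d lam]
    ring
  rw [e5]
  rw [Finset.sum_sub_distrib]
  unfold Xs
  rw [Finset.sum_range_succ' (fun c => ∑ d ∈ Finset.range (K'+1),
    (-1:ℚ)^c * (-1:ℚ)^d * Tm P m n c d lam) K']
  ring

end BP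
namespace BP

lemma main1 (m n : ℤ) (P : Ptn → ℚ) (hfin : (Function.support P).Finite) :
    Sop ℚ m (Sop ℚ n P) = -(Sop ℚ (n - 1) (Sop ℚ (m + 1) P)) := by
  set t₀ := hfin.toFinset.sup (fun μ => μ.size) with ht
  have hP : ∀ μ, P μ ≠ 0 → μ.size ≤ t₀ := fun μ h =>
    Finset.le_sup (f := fun μ => μ.size) ((Set.Finite.mem_toFinset hfin).mpr h)
  funext lam
  set K' := t₀ + m.natAbs + n.natAbs + 2 with hK
  have h1 : t₀ + n.toNat < K' + 1 := by omega
  have h2 : t₀ + (m + 1).toNat < K' + 1 := by omega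
  rw [Sop_Sop P t₀ hP m n K' h1 lam]
  have hr := Sop_Sop P t₀ hP (n - 1) (m + 1) K' h2 lam
  rw [show (n - 1) + 1 = n by ring, show (m + 1) - 1 = m by ring] at hr
  rw [Pi.neg_apply, hr]
  have hXa := Xs_ext hP m n (R := t₀ + 1) (S := t₀ + 1)
    (by omega : t₀ < t₀ + 1) (by omega : t₀ + 1 ≤ K' + 1)
    (by omega : t₀ < t₀ + 1) (by omega : t₀ + 1 ≤ K' + 1) lam
  have hXb := Xs_ext hP (m + 1) (n - 1) (R := t₀ + 1) (S := t₀ + 1)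
    (by omega : t₀ < t₀ + 1) (by omega : t₀ + 1 ≤ K')
    (by omega : t₀ < t₀ + 1) (by omega : t₀ + 1 ≤ K' + 1) lam
  have hXc := Xs_ext hP (n - 1) (m + 1) (R := t₀ + 1) (S := t₀ + 1)
    (by omega : t₀ < t₀ + 1) (by omega : t₀ + 1 ≤ K' + 1)
    (by omega : t₀ < t₀ + 1) (by omega : t₀ + 1 ≤ K' + 1) lam
  have hXd := Xs_ext hP n m (R := t₀ + 1) (S := t₀ + 1)
    (by omega : t₀ < t₀ + 1) (by omega : t₀ + 1 ≤ K')
    (by omega : t₀ < t₀ + 1) (by omega : t₀ + 1 ≤ K' + 1) lam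
  rw [hXa, hXb, hXc, hXd, Xs_sym P n m (t₀ + 1) lam,
    Xs_sym P (n - 1) (m + 1) (t₀ + 1) lam]
  ring

end BP

/-- The Bernstein creation operators satisfy the commutation rule
`S_m ∘ S_n = - S_{n-1} ∘ S_{m+1}` for all integers `m, n`, as operators on the
ring of symmetric functions (the span of the Schur functions, i.e. finitely
supported coefficient functions).  In particular `S_m ∘ S_{m+1} = 0`. -/
theorem bernstein_commutation (m n : ℤ) :
    (∀ P : Ptn → ℚ, (Function.support P).Finite →
      Sop ℚ m (Sop ℚ n P) = -(Sop ℚ (n - 1) (Sop ℚ (m + 1) P))) ∧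
    (∀ P : Ptn → ℚ, (Function.support P).Finite →
      Sop ℚ m (Sop ℚ (m + 1) P) = 0) := by
  refine ⟨fun P h => BP.main1 m n P h, fun P h => ?_⟩
  have h1 := BP.main1 m (m + 1) P h
  rw [show (m + 1) - 1 = m by ring] at h1
  funext lam
  have h2 := congrFun h1 lam
  simp only [Pi.neg_apply] at h2
  have h3 : Sop ℚ m (Sop ℚ (m + 1) P) lam = 0 := by linarith
  simpa using h3
end

section
/- Define the Jing operator H_m = Σ_{c≥0} q^c S_{m+c} ∘ h_c^⊥ on symmetric functions over ℚ(q), where S_b is the Bernstein operator. Then for every list of integers α = (α_1, ..., α_L), all coefficients in the Schur expansion of H_{α_1} ∘ ... ∘ H_{α_L}(1) are polynomials in q with integer coefficients. -/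
open scoped Classical

variable (F : Type) [Field F]

namespace JingAux

lemma Ptn.ext' {a b : Ptn} (h : ∀ i, a.parts i = b.parts i) : a = b := by
  cases a; cases b; simp only [Ptn.mk.injEq]; exact funext h

lemma parts_anti (mu : Ptn) : Antitone mu.parts :=
  antitone_nat_of_succ_le mu.antitone

lemma size_eq_sum (mu : Ptn) {n : ℕ} (hn : ∀ i, n ≤ i → mu.parts i = 0) :
    mu.size = ∑ i ∈ Finset.range n, mu.parts i := by
  apply finsum_eq_sum_of_support_subset
  intro i hi
  simp only [Function.mem_support] at hi
  simp only [Finset.coe_range, Set.mem_Iio]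
  by_contra h
  exact hi (hn i (le_of_not_gt h))

lemma parts_le_size (mu : Ptn) (i : ℕ) : mu.parts i ≤ mu.size := by
  obtain ⟨N, hN⟩ := mu.eventually_zero
  have h := size_eq_sum mu (n := max N (i + 1))
    (fun j hj => hN j (le_trans (le_max_left _ _) hj))
  rw [h]
  exact Finset.single_le_sum (fun j _ => Nat.zero_le _)
    (Finset.mem_range.mpr (lt_of_lt_of_le (Nat.lt_succ_self i) (le_max_right _ _)))

lemma parts_eq_zero_of_size_le (mu : Ptn) (i : ℕ) (h : mu.size ≤ i) : mu.parts i = 0 := by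
  by_contra hne
  obtain ⟨N, hN⟩ := mu.eventually_zero
  have hsz := size_eq_sum mu (n := max N (i + 1))
    (fun j hj => hN j (le_trans (le_max_left _ _) hj))
  have h1 : ∀ j ∈ Finset.range (i + 1), 1 ≤ mu.parts j := by
    intro j hj
    have := parts_anti mu (Nat.lt_succ_iff.mp (Finset.mem_range.mp hj))
    omega
  have h2 : i + 1 ≤ ∑ j ∈ Finset.range (i + 1), mu.parts j := by
    calc i + 1 = ∑ _j ∈ Finset.range (i + 1), 1 := by simp
    _ ≤ _ := Finset.sum_le_sum h1
  have h3 : ∑ j ∈ Finset.range (i + 1), mu.parts j ≤ mu.size := by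
    rw [hsz]
    exact Finset.sum_le_sum_of_subset
      (Finset.range_subset_range.mpr (le_max_right _ _))
  omega

lemma finite_size_le (K : ℕ) : {mu : Ptn | mu.size ≤ K}.Finite := by
  rw [← Set.finite_coe_iff]
  have hF : Function.Injective
      (fun (mu : {mu : Ptn | mu.size ≤ K}) (i : Fin K) =>
        (⟨mu.1.parts i, Nat.lt_succ_of_le (le_trans (parts_le_size _ _) mu.2)⟩ : Fin (K + 1))) := by
    intro a b hab
    apply Subtype.ext
    apply Ptn.ext'
    intro i
    by_cases hi : i < K
    · have := congrFun hab ⟨i, hi⟩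
      simpa using congrArg Fin.val this
    · push_neg at hi
      rw [parts_eq_zero_of_size_le a.1 i (le_trans a.2 hi),
        parts_eq_zero_of_size_le b.1 i (le_trans b.2 hi)]
  exact Finite.of_injective _ hF

lemma finite_HS_down (c : ℕ) (lam : Ptn) : {mu : Ptn | HS c lam mu}.Finite :=
  (finite_size_le lam.size).subset (fun mu hmu => by
    simp only [Set.mem_setOf_eq]
    have := hmu.2.1; omega)

lemma finite_HS_up (c : ℕ) (nu : Ptn) : {mu : Ptn | HS c mu nu}.Finite :=
  (finite_size_le (nu.size + c)).subset (fun _mu hmu => le_of_eq hmu.2.1)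

lemma finite_VS_up (c : ℕ) (nu : Ptn) : {mu : Ptn | VS c mu nu}.Finite :=
  (finite_size_le (nu.size + c)).subset (fun _mu hmu => le_of_eq hmu.2.1)

/-- The ring hom `ℤ[q] → ℚ(q)`. -/
noncomputable def φ : Polynomial ℤ →+* RatFunc ℚ :=
  (algebraMap (Polynomial ℚ) (RatFunc ℚ)).comp (Polynomial.mapRingHom (Int.castRingHom ℚ))

/-- The subring of `ℚ(q)` consisting of integer polynomials in `q`. -/
noncomputable def S : Subring (RatFunc ℚ) := φ.range

lemma X_mem_S : RatFunc.X ∈ S := by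
  refine ⟨Polynomial.X, ?_⟩
  simp [φ, Polynomial.map_X, RatFunc.algebraMap_X]

lemma finsum_mem_S {s : Set Ptn} (hs : s.Finite) {f : Ptn → RatFunc ℚ}
    (h : ∀ mu ∈ s, f mu ∈ S) : (∑ᶠ mu ∈ s, f mu) ∈ S := by
  rw [finsum_mem_eq_finite_toFinset_sum f hs]
  exact sum_mem (fun mu hmu => h mu (hs.mem_toFinset.mp hmu))

lemma finsum_mem_eq_zero' {s : Set Ptn} (hs : s.Finite) {f : Ptn → RatFunc ℚ}
    (h : ∀ mu ∈ s, f mu = 0) : (∑ᶠ mu ∈ s, f mu) = 0 := by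
  rw [finsum_mem_eq_finite_toFinset_sum f hs]
  exact Finset.sum_eq_zero (fun mu hmu => h mu (hs.mem_toFinset.mp hmu))

lemma finsum_mem_ne_zero {s : Set Ptn} (hs : s.Finite) {f : Ptn → RatFunc ℚ}
    (h : (∑ᶠ mu ∈ s, f mu) ≠ 0) : ∃ mu ∈ s, f mu ≠ 0 := by
  by_contra hc
  push_neg at hc
  exact h (finsum_mem_eq_zero' hs hc)

abbrev FF := RatFunc ℚ

/-- Size bound predicate. -/
def Bnd (N : ℕ) (P : Ptn → FF) : Prop := ∀ mu, P mu ≠ 0 → mu.size ≤ N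

/-- All values are integer polynomials in `q`. -/
def MemS (P : Ptn → FF) : Prop := ∀ mu, P mu ∈ S

-- rewriting the bare double finsums as set finsums
lemma Mh_eq (k : ℤ) (P : Ptn → FF) (lam : Ptn) (hk : ¬ k < 0) :
    Mh FF k P lam = ∑ᶠ mu ∈ {mu : Ptn | HS k.toNat lam mu}, P mu := by
  simp only [Mh, if_neg hk]; rfl

lemma eperp_eq (c : ℕ) (P : Ptn → FF) (nu : Ptn) :
    eperp FF c P nu = ∑ᶠ mu ∈ {mu : Ptn | VS c mu nu}, P mu := rfl

lemma hperp_eq (c : ℕ) (P : Ptn → FF) (nu : Ptn) :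
    hperp FF c P nu = ∑ᶠ mu ∈ {mu : Ptn | HS c mu nu}, P mu := rfl

lemma hperp_bnd {N : ℕ} {P : Ptn → FF} (hP : Bnd N P) (c : ℕ) :
    Bnd N (hperp FF c P) := by
  intro nu hnu
  rw [hperp_eq] at hnu
  obtain ⟨mu, hmu, hne⟩ := finsum_mem_ne_zero (finite_HS_up c nu) hnu
  have := hP mu hne
  have := hmu.2.1
  omega

lemma hperp_zero_of_large {N : ℕ} {P : Ptn → FF} (hP : Bnd N P) {c : ℕ} (hc : N < c)
    (nu : Ptn) : hperp FF c P nu = 0 := by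
  rw [hperp_eq]
  apply finsum_mem_eq_zero' (finite_HS_up c nu)
  intro mu hmu
  by_contra hne
  have := hP mu hne
  have := hmu.2.1
  omega

lemma eperp_zero_of_large {N : ℕ} {P : Ptn → FF} (hP : Bnd N P) {c : ℕ} (hc : N < c)
    (nu : Ptn) : eperp FF c P nu = 0 := by
  rw [eperp_eq]
  apply finsum_mem_eq_zero' (finite_VS_up c nu)
  intro mu hmu
  by_contra hne
  have := hP mu hne
  have := hmu.2.1
  omega

lemma hperp_memS {P : Ptn → FF} (hP : MemS P) (c : ℕ) : MemS (hperp FF c P) := by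
  intro nu
  rw [hperp_eq]
  exact finsum_mem_S (finite_HS_up c nu) (fun mu _ => hP mu)

lemma eperp_memS {P : Ptn → FF} (hP : MemS P) (c : ℕ) : MemS (eperp FF c P) := by
  intro nu
  rw [eperp_eq]
  exact finsum_mem_S (finite_VS_up c nu) (fun mu _ => hP mu)

lemma eperp_bnd {N : ℕ} {P : Ptn → FF} (hP : Bnd N P) (c : ℕ) :
    Bnd N (eperp FF c P) := by
  intro nu hnu
  rw [eperp_eq] at hnu
  obtain ⟨mu, hmu, hne⟩ := finsum_mem_ne_zero (finite_VS_up c nu) hnu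
  have := hP mu hne
  have := hmu.2.1
  omega

lemma Mh_memS (k : ℤ) {P : Ptn → FF} (hP : MemS P) : MemS (Mh FF k P) := by
  intro lam
  by_cases hk : k < 0
  · simp [Mh, if_pos hk, zero_mem]
  · rw [Mh_eq k P lam hk]
    exact finsum_mem_S (finite_HS_down _ lam) (fun mu _ => hP mu)

lemma Mh_bnd {N : ℕ} (k : ℤ) {P : Ptn → FF} (hP : Bnd N P) :
    Bnd (N + k.toNat) (Mh FF k P) := by
  intro lam hlam
  by_cases hk : k < 0
  · simp [Mh, if_pos hk] at hlam
  · rw [Mh_eq k P lam hk] at hlam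
    obtain ⟨mu, hmu, hne⟩ := finsum_mem_ne_zero (finite_HS_down _ lam) hlam
    have := hP mu hne
    have := hmu.2.1
    omega

lemma Mh_zero (k : ℤ) {P : Ptn → FF} (hP : ∀ mu, P mu = 0) (lam : Ptn) :
    Mh FF k P lam = 0 := by
  by_cases hk : k < 0
  · simp [Mh, if_pos hk]
  · rw [Mh_eq k P lam hk]
    exact finsum_mem_eq_zero' (finite_HS_down _ lam) (fun mu _ => hP mu)

lemma Sop_zero (m : ℤ) {P : Ptn → FF} (hP : ∀ mu, P mu = 0) (lam : Ptn) :
    Sop FF m P lam = 0 := by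
  unfold Sop
  have : ∀ c : ℕ, (-1 : FF) ^ c * Mh FF (m + c) (eperp FF c P) lam = 0 := by
    intro c
    rw [Mh_zero _ (fun nu => by
      rw [eperp_eq]
      exact finsum_mem_eq_zero' (finite_VS_up c nu) (fun mu _ => hP mu)), mul_zero]
  simp only [this, finsum_zero]

lemma Sop_eq_sum {N : ℕ} (m : ℤ) {P : Ptn → FF} (hP : Bnd N P) (lam : Ptn) :
    Sop FF m P lam =
      ∑ c ∈ Finset.range (N + 1), (-1 : FF) ^ c * Mh FF (m + c) (eperp FF c P) lam := by
  apply finsum_eq_sum_of_support_subset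
  intro c hc
  simp only [Function.mem_support] at hc
  simp only [Finset.coe_range, Set.mem_Iio]
  by_contra h
  push_neg at h
  exact hc (by rw [Mh_zero _ (eperp_zero_of_large hP (by omega)) lam, mul_zero])

lemma Sop_memS (m : ℤ) {N : ℕ} {P : Ptn → FF} (hB : Bnd N P) (hP : MemS P) :
    MemS (Sop FF m P) := by
  intro lam
  rw [Sop_eq_sum m hB lam]
  apply sum_mem
  intro c _
  exact mul_mem (pow_mem (neg_mem (one_mem S)) c) (Mh_memS _ (eperp_memS hP c) lam)

lemma Sop_bnd (m : ℤ) {N : ℕ} {P : Ptn → FF} (hB : Bnd N P) :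
    Bnd (2 * N + m.toNat) (Sop FF m P) := by
  intro lam hlam
  rw [Sop_eq_sum m hB lam] at hlam
  obtain ⟨c, hc, hne⟩ := Finset.exists_ne_zero_of_sum_ne_zero hlam
  have hne' : Mh FF (m + c) (eperp FF c P) lam ≠ 0 := by
    intro h; exact hne (by rw [h, mul_zero])
  have := Mh_bnd (m + c) (eperp_bnd hB c) lam hne'
  have hc' : c ≤ N := by
    by_contra h
    exact hne' (Mh_zero _ (eperp_zero_of_large hB (by omega)) lam)
  have : (m + c).toNat ≤ m.toNat + c := by omega
  omega

lemma Hop_eq_sum {N : ℕ} (q : FF) (m : ℤ) {P : Ptn → FF} (hP : Bnd N P) (lam : Ptn) :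
    Hop FF q m P lam =
      ∑ c ∈ Finset.range (N + 1), q ^ c * Sop FF (m + c) (hperp FF c P) lam := by
  apply finsum_eq_sum_of_support_subset
  intro c hc
  simp only [Function.mem_support] at hc
  simp only [Finset.coe_range, Set.mem_Iio]
  by_contra h
  push_neg at h
  exact hc (by rw [Sop_zero _ (hperp_zero_of_large hP (by omega)) lam, mul_zero])

/-- The full invariant. -/
def Good (P : Ptn → FF) : Prop := (∃ N, Bnd N P) ∧ MemS P

lemma good_Hop {P : Ptn → FF} (hP : Good P) (m : ℤ) : Good (Hop FF RatFunc.X m P) := by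
  obtain ⟨⟨N, hB⟩, hM⟩ := hP
  constructor
  · refine ⟨2 * N + (m + N).toNat, ?_⟩
    intro lam hlam
    rw [Hop_eq_sum _ m hB lam] at hlam
    obtain ⟨c, hc, hne⟩ := Finset.exists_ne_zero_of_sum_ne_zero hlam
    have hne' : Sop FF (m + c) (hperp FF c P) lam ≠ 0 := by
      intro h; exact hne (by rw [h, mul_zero])
    have := Sop_bnd (m + c) (hperp_bnd hB c) lam hne'
    have hcN : c < N + 1 := Finset.mem_range.mp hc
    have : (m + c).toNat ≤ (m + N).toNat := by omega
    omega
  · intro lam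
    rw [Hop_eq_sum _ m hB lam]
    apply sum_mem
    intro c _
    exact mul_mem (pow_mem X_mem_S c)
      (Sop_memS (m + c) (hperp_bnd hB c) (hperp_memS hM c) lam)

lemma ptnZero_size : ptnZero.size = 0 := by
  simp [Ptn.size, ptnZero, finsum_zero]

lemma good_oneSym : Good (oneSym FF) := by
  constructor
  · refine ⟨0, fun mu hmu => ?_⟩
    simp only [oneSym, sB, ne_eq, ite_eq_right_iff, not_forall] at hmu
    rw [hmu.1, ptnZero_size]
  · intro mu
    simp only [oneSym, sB]
    split
    · exact one_mem S
    · exact zero_mem S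

end JingAux

/-- Over the field `F = ℚ(q)` of rational functions, with `q` the indeterminate, and with
the Jing operators `H_m = Σ_{c≥0} q^c S_{m+c} ∘ h_c^⊥`: for every list of integers
`α = (α_1, ..., α_L)`, all coefficients in the Schur expansion of
`H_{α_1} ∘ ... ∘ H_{α_L} (1)` are polynomials in `q` with integer coefficients. -/
theorem jing_schur_coeffs_int_poly (αs : List ℤ) :
    ∀ lam : Ptn,
      ∃ p : Polynomial ℤ,
        List.foldr (fun (a : ℤ) (P : Ptn → RatFunc ℚ) => Hop (RatFunc ℚ) RatFunc.X a P)
            (oneSym (RatFunc ℚ)) αs lam =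
          algebraMap (Polynomial ℚ) (RatFunc ℚ) (p.map (Int.castRingHom ℚ)) := by
  have hGood : JingAux.Good (List.foldr
      (fun (a : ℤ) (P : Ptn → RatFunc ℚ) => Hop (RatFunc ℚ) RatFunc.X a P)
      (oneSym (RatFunc ℚ)) αs) := by
    induction αs with
    | nil => exact JingAux.good_oneSym
    | cons a as ih => exact JingAux.good_Hop ih a
  intro lam
  obtain ⟨p, hp⟩ := hGood.2 lam
  exact ⟨p, hp.symm⟩
end
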